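/- arXiv:0808.2944 — 6 statements merged into one kernel-verified Lean document; each statement's English description precedes it below -/
import Mathlib

section
/- Let G be a countable group, π a unitary representation of G on a complex Hilbert space H, and N ∈ ℕ. Suppose ξ₁,…,ξ_N are Parseval frame vectors for H, ξ_{N+1} is a Parseval frame vector for the closed subspace M := closure(span{π(g)ξ_{N+1} : g ∈ G}), the tuple ξ₁,…,ξ_{N+1} is strongly disjoint, and ∑_{i=1}^{N+1} ‖ξᵢ‖² = 1. Then there is no nonzero vector ξ_{N+2} in any complex Hilbert space K carrying a unitary representation σ of G such that ξ_{N+2} is a Parseval frame vector for the closed span of its orbit {σ(g)ξ_{N+2} : g ∈ G} and ξ_{N+2} is strongly disjoint from each ξᵢ, i = 1,…,N+1. -/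
noncomputable section

open scoped ComplexConjugate

local notation "⟪" x ", " y "⟫" => @inner ℂ _ _ x y

/-- A group is ICC if every nontrivial conjugacy class is infinite. -/
def IsICC (G : Type*) [Group G] : Prop :=
  ∀ g : G, g ≠ 1 → {x : G | ∃ h : G, x = h * g * h⁻¹}.Infinite

variable {G : Type*} [Group G]
variable {H : Type*} [NormedAddCommGroup H] [InnerProductSpace ℂ H]

/-- `ξ` is a Parseval frame vector for the whole space `H`. -/
def IsParsevalFrameVector (π : G →* (H ≃ₗᵢ[ℂ] H)) (ξ : H) : Prop :=
  ∀ f : H, ∑' g : G, ‖⟪f, π g ξ⟫‖ ^ 2 = ‖f‖ ^ 2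

/-- `ξ` is a Parseval frame vector for the (closed) subspace `M` of `H`. -/
def IsParsevalFrameVectorIn (π : G →* (H ≃ₗᵢ[ℂ] H)) (ξ : H) (M : Submodule ℂ H) : Prop :=
  (∀ g : G, π g ξ ∈ M) ∧ ∀ f ∈ M, ∑' g : G, ‖⟪f, π g ξ⟫‖ ^ 2 = ‖f‖ ^ 2

/-- The closed linear span of the orbit `{π(g)ξ : g ∈ G}`. -/
def orbitSpan (π : G →* (H ≃ₗᵢ[ℂ] H)) (ξ : H) : Submodule ℂ H :=
  (Submodule.span ℂ (Set.range fun g : G => π g ξ)).topologicalClosure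

/-- `ξ₁, …, ξ_k` (with `ξ i` a Parseval frame vector for `M i`) form a strongly disjoint
`k`-tuple: `{π(g)ξ₁ ⊕ ⋯ ⊕ π(g)ξ_k : g ∈ G}` is a Parseval frame for `M₁ ⊕ ⋯ ⊕ M_k`. -/
def StronglyDisjointTuple {k : ℕ} (π : G →* (H ≃ₗᵢ[ℂ] H)) (ξ : Fin k → H)
    (M : Fin k → Submodule ℂ H) : Prop :=
  ∀ f : Fin k → H, (∀ i, f i ∈ M i) →
    ∑' g : G, ‖∑ i, ⟪f i, π g (ξ i)⟫‖ ^ 2 = ∑ i, ‖f i‖ ^ 2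

/-- `T` belongs to the commutant `π(G)'`. -/
def InCommutant (π : G →* (H ≃ₗᵢ[ℂ] H)) (T : H →L[ℂ] H) : Prop :=
  ∀ (g : G) (x : H), T (π g x) = π g (T x)

/-- The closed subspace `closure {T ξ : T ∈ π(G)'}`. -/
def commOrbit (π : G →* (H ≃ₗᵢ[ℂ] H)) (ξ : H) : Submodule ℂ H :=
  (Submodule.span ℂ {x : H | ∃ T : H →L[ℂ] H, InCommutant π T ∧ x = T ξ}).topologicalClosure

/-- `p` is the orthogonal projection of `H` onto the subspace `M`. -/
def IsOrthoProjOnto (M : Submodule ℂ H) (p : H →L[ℂ] H) : Prop :=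
  ∀ x : H, p x ∈ M ∧ x - p x ∈ Mᗮ

/-- `ζ` is a Bessel vector for the representation `π`. -/
def IsBesselVector (π : G →* (H ≃ₗᵢ[ℂ] H)) (ζ : H) : Prop :=
  ∃ B : ℝ, 0 < B ∧ ∀ f : H, ∀ s : Finset G, ∑ g ∈ s, ‖⟪f, π g ζ⟫‖ ^ 2 ≤ B * ‖f‖ ^ 2

/-- Strong disjointness of a Parseval frame vector `ξ` (for the subspace `M` of `H`, under `π`)
and `ζ` (for the subspace `M₂` of `H₂`, under `σ`), expressed by the vanishing of the mixed
sums `∑_g ⟨v, π(g)ξ⟩ conj ⟨w, σ(g)ζ⟩`. -/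
def StronglyDisjointPairIn (π : G →* (H ≃ₗᵢ[ℂ] H)) {H₂ : Type*} [NormedAddCommGroup H₂]
    [InnerProductSpace ℂ H₂] (σ : G →* (H₂ ≃ₗᵢ[ℂ] H₂)) (ξ : H) (ζ : H₂)
    (M : Submodule ℂ H) (M₂ : Submodule ℂ H₂) : Prop :=
  ∀ v ∈ M, ∀ w ∈ M₂, ∑' g : G, ⟪v, π g ξ⟫ * (starRingEnd ℂ) ⟪w, σ g ζ⟫ = 0

/-- A Riesz sequence: two-sided ℓ²-bounds on finite linear combinations. -/
def IsRieszSequence {J : Type*} (f : J → H) : Prop :=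
  ∃ A B : ℝ, 0 < A ∧ 0 < B ∧ ∀ c : J →₀ ℂ,
    A * ∑ j ∈ c.support, ‖c j‖ ^ 2 ≤ ‖∑ j ∈ c.support, c j • f j‖ ^ 2 ∧
    ‖∑ j ∈ c.support, c j • f j‖ ^ 2 ≤ B * ∑ j ∈ c.support, ‖c j‖ ^ 2

theorem stmt1 {G : Type*} [Group G] [Countable G]
    {H : Type*} [NormedAddCommGroup H] [InnerProductSpace ℂ H] [CompleteSpace H]
    (π : G →* (H ≃ₗᵢ[ℂ] H)) (N : ℕ) (ξ : Fin (N + 1) → H)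
    (hP : ∀ i : Fin (N + 1), i ≠ Fin.last N → IsParsevalFrameVector π (ξ i))
    (hlast : IsParsevalFrameVectorIn π (ξ (Fin.last N)) (orbitSpan π (ξ (Fin.last N))))
    (hdisj : StronglyDisjointTuple π ξ
      (fun i => if i = Fin.last N then orbitSpan π (ξ (Fin.last N)) else ⊤))
    (hnorm : ∑ i, ‖ξ i‖ ^ 2 = 1)
    (K : Type*) [NormedAddCommGroup K] [InnerProductSpace ℂ K] [CompleteSpace K]
    (σ : G →* (K ≃ₗᵢ[ℂ] K)) (ζ : K) (hζ0 : ζ ≠ 0)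
    (hζP : IsParsevalFrameVectorIn σ ζ (orbitSpan σ ζ)) :
    ¬ (∀ i : Fin (N + 1), StronglyDisjointPairIn π σ (ξ i) ζ
        (if i = Fin.last N then orbitSpan π (ξ (Fin.last N)) else (⊤ : Submodule ℂ H))
        (orbitSpan σ ζ)) := by
  classical
  intro hsd
  -- ζ lies in its own orbit span
  have hζmem : ζ ∈ orbitSpan σ ζ := by
    apply Submodule.le_topologicalClosure
    exact Submodule.subset_span ⟨1, by simp⟩
  -- each ξ i lies in the corresponding subspace
  have hξmem : ∀ i : Fin (N + 1),
      ξ i ∈ (if i = Fin.last N then orbitSpan π (ξ (Fin.last N)) else (⊤ : Submodule ℂ H)) := by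
    intro i
    by_cases hi : i = Fin.last N
    · simp only [hi, if_pos rfl]
      apply Submodule.le_topologicalClosure
      exact Submodule.subset_span ⟨1, by simp⟩
    · simp [hi]
  have hζnorm : (0:ℝ) < ‖ζ‖ ^ 2 := pow_pos (norm_pos_iff.mpr hζ0) 2
  -- summability of the ℓ² coefficients of ζ
  have Sζ : Summable (fun g : G => ‖⟪ζ, σ g ζ⟫‖ ^ 2) := by
    by_contra hns
    have := hζP.2 ζ hζmem
    rw [tsum_eq_zero_of_not_summable hns] at this
    exact absurd this.symm (ne_of_gt hζnorm)
  -- summability of the ℓ² coefficients of each ξ i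
  have Sξ : ∀ i : Fin (N + 1), Summable (fun g : G => ‖⟪ξ i, π g (ξ i)⟫‖ ^ 2) := by
    intro i
    by_cases h0 : ξ i = 0
    · have hz : (fun g : G => ‖⟪ξ i, π g (ξ i)⟫‖ ^ 2) = fun _ => 0 := by
        funext g; simp [h0]
      rw [hz]; exact summable_zero
    · have hpos : (0:ℝ) < ‖ξ i‖ ^ 2 := pow_pos (norm_pos_iff.mpr h0) 2
      by_cases hi : i = Fin.last N
      · by_contra hns
        have := hlast.2 (ξ (Fin.last N)) (by
          apply Submodule.le_topologicalClosure
          exact Submodule.subset_span ⟨1, by simp⟩)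
        rw [← hi] at this
        rw [tsum_eq_zero_of_not_summable hns] at this
        exact absurd this.symm (ne_of_gt hpos)
      · by_contra hns
        have := hP i hi (ξ i)
        rw [tsum_eq_zero_of_not_summable hns] at this
        exact absurd this.symm (ne_of_gt hpos)
  -- summability of the mixed products
  have Sprod : ∀ i : Fin (N + 1),
      Summable (fun g : G => ⟪ξ i, π g (ξ i)⟫ * (starRingEnd ℂ) ⟪ζ, σ g ζ⟫) := by
    intro i
    apply Summable.of_norm
    have hmaj : ∀ g : G,
        ‖⟪ξ i, π g (ξ i)⟫ * (starRingEnd ℂ) ⟪ζ, σ g ζ⟫‖ ≤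
          (‖⟪ξ i, π g (ξ i)⟫‖ ^ 2 + ‖⟪ζ, σ g ζ⟫‖ ^ 2) / 2 := by
      intro g
      rw [norm_mul, RingHomIsometric.norm_map]
      nlinarith [sq_nonneg (‖⟪ξ i, π g (ξ i)⟫‖ - ‖⟪ζ, σ g ζ⟫‖), norm_nonneg (⟪ξ i, π g (ξ i)⟫),
        norm_nonneg (⟪ζ, σ g ζ⟫)]
    exact Summable.of_nonneg_of_le (fun g => norm_nonneg _) hmaj (((Sξ i).add Sζ).div_const 2)
  -- the combined coefficient function
  set c : G → ℂ := fun g => ∑ i, ⟪ξ i, π g (ξ i)⟫ with hc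
  have hsum1 : ∑' g : G, ‖c g‖ ^ 2 = 1 := by
    have := hdisj ξ hξmem
    rw [hnorm] at this
    exact this
  have hc1 : c 1 = 1 := by
    have : ∀ i : Fin (N + 1), ⟪ξ i, π (1:G) (ξ i)⟫ = ((‖ξ i‖ ^ 2 : ℝ) : ℂ) := by
      intro i
      rw [map_one]
      have : ((1 : H ≃ₗᵢ[ℂ] H) : H → H) (ξ i) = ξ i := rfl
      rw [this, inner_self_eq_norm_sq_to_K]
      norm_cast
    simp only [hc, this]
    rw [← Complex.ofReal_sum, hnorm]
    norm_num
  have Sc : Summable (fun g : G => ‖c g‖ ^ 2) := by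
    by_contra hns
    rw [tsum_eq_zero_of_not_summable hns] at hsum1
    norm_num at hsum1
  have hc0 : ∀ g : G, g ≠ 1 → c g = 0 := by
    intro g hg
    have hle : ∑ x ∈ ({1, g} : Finset G), ‖c x‖ ^ 2 ≤ ∑' x : G, ‖c x‖ ^ 2 :=
      Summable.sum_le_tsum _ (fun x _ => by positivity) Sc
    rw [Finset.sum_pair (Ne.symm hg), hsum1, hc1] at hle
    have : ‖c g‖ ^ 2 ≤ 0 := by
      have : ‖(1:ℂ)‖ ^ 2 = 1 := by norm_num
      linarith [hle, this]
    have : ‖c g‖ = 0 := by nlinarith [norm_nonneg (c g)]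
    exact norm_eq_zero.mp this
  -- the key computation
  have hkey : ∑' g : G, c g * (starRingEnd ℂ) ⟪ζ, σ g ζ⟫ = 0 := by
    have heq : (fun g : G => c g * (starRingEnd ℂ) ⟪ζ, σ g ζ⟫) =
        fun g : G => ∑ i, ⟪ξ i, π g (ξ i)⟫ * (starRingEnd ℂ) ⟪ζ, σ g ζ⟫ := by
      funext g
      rw [hc, Finset.sum_mul]
    rw [heq, Summable.tsum_finsetSum (fun i _ => Sprod i)]
    apply Finset.sum_eq_zero
    intro i _
    exact hsd i (ξ i) (hξmem i) ζ hζmem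
  have hsingle : ∑' g : G, c g * (starRingEnd ℂ) ⟪ζ, σ g ζ⟫ =
      c 1 * (starRingEnd ℂ) ⟪ζ, σ (1:G) ζ⟫ := by
    apply tsum_eq_single
    intro g hg
    rw [hc0 g hg, zero_mul]
  rw [hsingle, hc1, one_mul, map_one] at hkey
  have hσ1 : ((1 : K ≃ₗᵢ[ℂ] K) : K → K) ζ = ζ := rfl
  rw [hσ1, inner_self_eq_norm_sq_to_K, map_pow, RCLike.conj_ofReal] at hkey
  have hz : (‖ζ‖ : ℂ) = 0 := (pow_eq_zero_iff (two_ne_zero)).mp hkey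
  have : ‖ζ‖ = 0 := by exact_mod_cast hz
  exact hζ0 (norm_eq_zero.mp this)
end
end

section
/- Let G be a countable ICC group and π a unitary representation of G on a complex Hilbert space H. Assume ξ₁,…,ξ_N are Parseval frame vectors for H, ξ_{N+1} is a Parseval frame vector for M := closure(span{π(g)ξ_{N+1} : g ∈ G}) with p_r' the orthogonal projection of H onto M, the (N+1)-tuple ξ₁,…,ξ_{N+1} is strongly disjoint, and ∑_{i=1}^{N+1} ‖ξᵢ‖² = 1. Let η ∈ H be a Parseval frame vector for a closed subspace of H, and let q' ∈ π(G)' be the orthogonal projection onto that subspace. Then there exist unique operators u₁',…,u_{N+1}' ∈ π(G)' with q'uᵢ' = uᵢ' for all i and u_{N+1}'p_r' = u_{N+1}', such that η = u₁'ξ₁ + ⋯ + u_{N+1}'ξ_{N+1}; moreover ∑_{i=1}^{N+1} uᵢ'(uᵢ')* = q'. -/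
noncomputable section

open scoped ComplexConjugate

local notation "⟪" x ", " y "⟫" => @inner ℂ _ _ x y

variable {G : Type*} [Group G]
variable {H : Type*} [NormedAddCommGroup H] [InnerProductSpace ℂ H]

namespace S5
section
set_option linter.unusedSectionVars false
open scoped ENNReal

variable {G : Type*} [Group G]
variable {H : Type*} [NormedAddCommGroup H] [InnerProductSpace ℂ H] [CompleteSpace H]

/-- Square-summable sequences over `G`. -/
abbrev L2 (G : Type*) : Type _ := lp (fun _ : G => ℂ) 2

section proj
variable {M : Submodule ℂ H} {P : H →L[ℂ] H}

lemma proj_fix (h : IsOrthoProjOnto M P) {x : H} (hx : x ∈ M) : P x = x := by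
  have h1 : x - P x ∈ M := M.sub_mem hx (h x).1
  have : ⟪x - P x, x - P x⟫ = 0 := (h x).2 _ h1
  rw [inner_self_eq_zero] at this
  linear_combination (norm := module) -this

lemma inner_proj_right (h : IsOrthoProjOnto M P) {m : H} (hm : m ∈ M) (x : H) :
    ⟪m, P x⟫ = ⟪m, x⟫ := by
  have h0 : ⟪m, x - P x⟫ = 0 := (h x).2 m hm
  rw [inner_sub_right, sub_eq_zero] at h0
  exact h0.symm

lemma inner_proj_left (h : IsOrthoProjOnto M P) {m : H} (hm : m ∈ M) (x : H) :
    ⟪P x, m⟫ = ⟪x, m⟫ := by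
  rw [← inner_conj_symm, inner_proj_right h hm, inner_conj_symm]

lemma proj_selfAdj (h : IsOrthoProjOnto M P) (x y : H) : ⟪P x, y⟫ = ⟪x, P y⟫ := by
  rw [← inner_proj_right h (h x).1 y, inner_proj_left h (h y).1 x]

lemma proj_norm_sq (h : IsOrthoProjOnto M P) (x : H) :
    ‖x‖ ^ 2 = ‖P x‖ ^ 2 + ‖x - P x‖ ^ 2 := by
  have horth : ⟪P x, x - P x⟫ = 0 := (h x).2 (P x) (h x).1
  have h2 := norm_add_sq (𝕜 := ℂ) (P x) (x - P x)
  rw [horth] at h2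
  simp only [map_zero, mul_zero, add_zero, add_sub_cancel] at h2
  exact h2

lemma proj_norm_le (h : IsOrthoProjOnto M P) (x : H) : ‖P x‖ ≤ ‖x‖ := by
  have h2 := proj_norm_sq h x
  nlinarith [norm_nonneg (P x), norm_nonneg x, sq_nonneg (‖x - P x‖)]

lemma proj_adjoint (h : IsOrthoProjOnto M P) : ContinuousLinearMap.adjoint P = P := by
  refine ContinuousLinearMap.ext fun x => ext_inner_right ℂ fun y => ?_
  rw [ContinuousLinearMap.adjoint_inner_left, ← proj_selfAdj h]

end proj

variable (π : G →* (H ≃ₗᵢ[ℂ] H))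

lemma inner_pi_left (h : G) (v f : H) : ⟪π h v, f⟫ = ⟪v, π h⁻¹ f⟫ := by
  rw [← LinearIsometryEquiv.inner_map_map (π h) v (π h⁻¹ f)]
  simp

lemma pi_pi (g h : G) (v : H) : π g (π h v) = π (g * h) v := by simp

section Theta
variable {ζ : H} {M : Submodule ℂ H} {P : H →L[ℂ] H}
variable (hproj : IsOrthoProjOnto M P) (horb : ∀ g : G, π g ζ ∈ M)
  (hpars : ∀ f ∈ M, ∑' g : G, ‖⟪f, π g ζ⟫‖ ^ 2 = ‖f‖ ^ 2)

include hproj horb in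
lemma coeff_proj (f : H) (g : G) : ⟪π g ζ, f⟫ = ⟪π g ζ, P f⟫ :=
  (inner_proj_right hproj (horb g) f).symm

include hproj horb hpars in
lemma coeff_tsum (f : H) : ∑' g : G, ‖⟪π g ζ, f⟫‖ ^ 2 = ‖P f‖ ^ 2 := by
  have := hpars (P f) (hproj f).1
  calc ∑' g : G, ‖⟪π g ζ, f⟫‖ ^ 2 = ∑' g : G, ‖⟪P f, π g ζ⟫‖ ^ 2 := by
        refine tsum_congr fun g => ?_
        rw [coeff_proj π hproj horb, ← norm_inner_symm]
    _ = ‖P f‖ ^ 2 := this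

include hproj horb hpars in
lemma coeff_summable (f : H) : Summable fun g : G => ‖⟪π g ζ, f⟫‖ ^ 2 := by
  by_cases hPf : P f = 0
  · refine summable_of_ne_finset_zero (s := ∅) fun g _ => ?_
    rw [coeff_proj π hproj horb, hPf]
    simp
  · by_contra hs
    have h0 := tsum_eq_zero_of_not_summable hs
    rw [coeff_tsum π hproj horb hpars] at h0
    have : ‖P f‖ = 0 := by nlinarith [norm_nonneg (P f)]
    exact hPf (norm_eq_zero.mp this)

include hproj horb hpars in
lemma coeff_mem (f : H) : Memℓp (fun g : G => ⟪π g ζ, f⟫) (2 : ℝ≥0∞) := by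
  apply memℓp_gen
  have h2 : (2 : ℝ≥0∞).toReal = (2 : ℝ) := by norm_num
  rw [h2]
  refine (coeff_summable π hproj horb hpars f).congr fun g => ?_
  rw [← Real.rpow_natCast ‖_‖ 2]
  norm_num

include hproj horb hpars in
lemma memEl_norm (f : H) :
    ‖(⟨fun g => ⟪π g ζ, f⟫, coeff_mem π hproj horb hpars f⟩ : L2 G)‖ = ‖P f‖ := by
  set x : L2 G := ⟨fun g => ⟪π g ζ, f⟫, coeff_mem π hproj horb hpars f⟩ with hxdef
  have h2 : (0:ℝ) < (2:ℝ≥0∞).toReal := by norm_num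
  have hx := lp.norm_rpow_eq_tsum h2 x
  have ht : ∑' g : G, ‖x g‖ ^ (2:ℝ≥0∞).toReal = ∑' g : G, ‖⟪π g ζ, f⟫‖ ^ 2 := by
    refine tsum_congr fun g => ?_
    have : x g = ⟪π g ζ, f⟫ := rfl
    rw [this, ← Real.rpow_natCast ‖_‖ 2]
    norm_num
  rw [ht, coeff_tsum π hproj horb hpars f] at hx
  have hxx : ‖x‖ ^ (2:ℝ≥0∞).toReal = ‖x‖ ^ (2:ℕ) := by
    rw [← Real.rpow_natCast ‖x‖ 2]; norm_num
  rw [hxx] at hx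
  calc ‖x‖ = Real.sqrt (‖x‖ ^ 2) := (Real.sqrt_sq (norm_nonneg _)).symm
    _ = Real.sqrt (‖P f‖ ^ 2) := by rw [hx]
    _ = ‖P f‖ := Real.sqrt_sq (norm_nonneg _)

/-- The analysis operator. -/
def Theta : H →L[ℂ] L2 G :=
  LinearMap.mkContinuous
    { toFun := fun f => (⟨fun g => ⟪π g ζ, f⟫, coeff_mem π hproj horb hpars f⟩ : L2 G)
      map_add' := fun x y => by ext g; simp [inner_add_right, lp.coeFn_add, Pi.add_apply]; rfl
      map_smul' := fun c x => by ext g; simp [inner_smul_right, lp.coeFn_smul, Pi.smul_apply] }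
    1 (fun f => by
      rw [one_mul]
      exact le_trans (le_of_eq (memEl_norm π hproj horb hpars f)) (proj_norm_le hproj f))

lemma Theta_apply (f : H) (g : G) : (Theta π hproj horb hpars f : ∀ _ : G, ℂ) g = ⟪π g ζ, f⟫ := rfl

lemma Theta_norm (f : H) : ‖Theta π hproj horb hpars f‖ = ‖P f‖ :=
  memEl_norm π hproj horb hpars f

lemma Theta_proj (f : H) : Theta π hproj horb hpars (P f) = Theta π hproj horb hpars f := by
  apply lp.ext
  funext g
  rw [Theta_apply, Theta_apply]
  exact (coeff_proj π hproj horb f g).symm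

lemma Theta_inner (x y : H) :
    ⟪Theta π hproj horb hpars x, Theta π hproj horb hpars y⟫ = ⟪P x, P y⟫ := by
  let J : M →ₗᵢ[ℂ] L2 G :=
    { toLinearMap := (Theta π hproj horb hpars : H →ₗ[ℂ] L2 G).comp (M.subtype)
      norm_map' := fun m => by
        simp only [LinearMap.comp_apply, Submodule.subtype_apply, ContinuousLinearMap.coe_coe]
        rw [Theta_norm π hproj horb hpars, proj_fix hproj m.2]
        rfl }
  have hJ : ∀ m : M, J m = Theta π hproj horb hpars (m : H) := fun m => rfl
  calc ⟪Theta π hproj horb hpars x, Theta π hproj horb hpars y⟫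
      = ⟪Theta π hproj horb hpars (P x), Theta π hproj horb hpars (P y)⟫ := by
        rw [Theta_proj, Theta_proj]
    _ = ⟪J ⟨P x, (hproj x).1⟩, J ⟨P y, (hproj y).1⟩⟫ := by rw [hJ, hJ]
    _ = ⟪(⟨P x, (hproj x).1⟩ : M), (⟨P y, (hproj y).1⟩ : M)⟫ := J.inner_map_map _ _
    _ = ⟪P x, P y⟫ := rfl

lemma Theta_adjoint_Theta :
    (ContinuousLinearMap.adjoint (Theta π hproj horb hpars)).comp (Theta π hproj horb hpars)
      = P := by
  refine ContinuousLinearMap.ext fun x => ext_inner_right ℂ fun y => ?_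
  rw [ContinuousLinearMap.comp_apply, ContinuousLinearMap.adjoint_inner_left]
  rw [show ⟪Theta π hproj horb hpars x, Theta π hproj horb hpars y⟫ = ⟪P x, P y⟫ from
    Theta_inner π hproj horb hpars x y]
  exact inner_proj_right hproj (hproj x).1 y

lemma Theta_adjoint_single [DecidableEq G] (h : G) :
    ContinuousLinearMap.adjoint (Theta π hproj horb hpars) (lp.single 2 h (1:ℂ)) = π h ζ := by
  refine ext_inner_right ℂ fun f => ?_
  rw [ContinuousLinearMap.adjoint_inner_left, lp.inner_single_left]
  rw [show (Theta π hproj horb hpars f : ∀ _ : G, ℂ) h = ⟪π h ζ, f⟫ from rfl]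
  simp [RCLike.inner_apply]

lemma Theta_proj' {P' : H →L[ℂ] H} (hP' : IsOrthoProjOnto M P') (f : H) :
    Theta π hproj horb hpars (P' f) = Theta π hproj horb hpars f := by
  apply lp.ext
  funext g
  rw [Theta_apply, Theta_apply]
  exact inner_proj_right hP' (horb g) f

end Theta

lemma sum_single_inner [DecidableEq G] (c : L2 G) (g : G) :
    (c : ∀ _ : G, ℂ) g = ⟪lp.single 2 g (1:ℂ), c⟫ := by
  rw [lp.inner_single_left]
  simp [RCLike.inner_apply]

lemma sum_id {k : ℕ} [DecidableEq G] (T : Fin k → (L2 G →L[ℂ] L2 G))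
    (hsa : ∀ i, ContinuousLinearMap.adjoint (T i) = T i)
    (hs : ∀ g : G, ∑ i, (T i) (lp.single 2 g (1:ℂ)) = lp.single 2 g (1:ℂ)) (c : L2 G) :
    (∑ i, T i) c = c := by
  apply lp.ext
  funext g
  rw [sum_single_inner ((∑ i, T i) c) g, sum_single_inner c g]
  rw [ContinuousLinearMap.sum_apply, inner_sum]
  have hterm : ∀ i, ⟪lp.single 2 g (1:ℂ), (T i) c⟫ = ⟪(T i) (lp.single 2 g (1:ℂ)), c⟫ := by
    intro i
    rw [← ContinuousLinearMap.adjoint_inner_left, hsa i]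
  rw [Finset.sum_congr rfl fun i _ => hterm i, ← sum_inner, hs g]

attribute [irreducible] Theta

section TwoTheta
variable {ζ₁ ζ₂ : H} {M₁ M₂ : Submodule ℂ H} {P₁ P₂ : H →L[ℂ] H}
variable (hproj1 : IsOrthoProjOnto M₁ P₁) (horb1 : ∀ g : G, π g ζ₁ ∈ M₁)
  (hpars1 : ∀ f ∈ M₁, ∑' g : G, ‖⟪f, π g ζ₁⟫‖ ^ 2 = ‖f‖ ^ 2)
  (hproj2 : IsOrthoProjOnto M₂ P₂) (horb2 : ∀ g : G, π g ζ₂ ∈ M₂)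
  (hpars2 : ∀ f ∈ M₂, ∑' g : G, ‖⟪f, π g ζ₂⟫‖ ^ 2 = ‖f‖ ^ 2)

lemma adj_theta_comp_theta_commutes (h : G) (x : H) :
    (ContinuousLinearMap.adjoint (Theta π hproj2 horb2 hpars2))
        (Theta π hproj1 horb1 hpars1 (π h x))
      = π h ((ContinuousLinearMap.adjoint (Theta π hproj2 horb2 hpars2))
        (Theta π hproj1 horb1 hpars1 x)) := by
  refine ext_inner_right ℂ fun f => ?_
  rw [ContinuousLinearMap.adjoint_inner_left]
  rw [inner_pi_left, ContinuousLinearMap.adjoint_inner_left]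
  rw [lp.inner_eq_tsum, lp.inner_eq_tsum]
  have hL : ∀ g : G, ⟪(Theta π hproj1 horb1 hpars1 (π h x) : ∀ _ : G, ℂ) g,
      (Theta π hproj2 horb2 hpars2 f : ∀ _ : G, ℂ) g⟫
      = (starRingEnd ℂ) ⟪π ((h⁻¹ * g)) ζ₁, x⟫ * ⟪π g ζ₂, f⟫ := by
    intro g
    rw [Theta_apply, Theta_apply, RCLike.inner_apply]
    rw [mul_comm]
    congr 2
    rw [← LinearIsometryEquiv.inner_map_map (π h) (π (h⁻¹ * g) ζ₁) x, pi_pi]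
    congr 2
    group
  have hR : ∀ g : G, ⟪(Theta π hproj1 horb1 hpars1 x : ∀ _ : G, ℂ) g,
      (Theta π hproj2 horb2 hpars2 (π h⁻¹ f) : ∀ _ : G, ℂ) g⟫
      = (starRingEnd ℂ) ⟪π (h⁻¹ * (h * g)) ζ₁, x⟫ * ⟪π (h * g) ζ₂, f⟫ := by
    intro g
    rw [Theta_apply, Theta_apply, RCLike.inner_apply]
    have e1 : ⟪π g ζ₂, π h⁻¹ f⟫ = ⟪π (h * g) ζ₂, f⟫ := by
      rw [← inner_pi_left π h (π g ζ₂) f, pi_pi]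
    have e2 : (h⁻¹ * (h * g)) = g := by group
    rw [e1, e2, mul_comm]
  calc ∑' g : G, ⟪(Theta π hproj1 horb1 hpars1 (π h x) : ∀ _ : G, ℂ) g,
          (Theta π hproj2 horb2 hpars2 f : ∀ _ : G, ℂ) g⟫
      = ∑' g : G, (starRingEnd ℂ) ⟪π ((h⁻¹ * g)) ζ₁, x⟫ * ⟪π g ζ₂, f⟫ := tsum_congr hL
    _ = ∑' g : G, (starRingEnd ℂ) ⟪π (h⁻¹ * (h * g)) ζ₁, x⟫ * ⟪π (h * g) ζ₂, f⟫ :=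
        ((Equiv.mulLeft h).tsum_eq fun g =>
          (starRingEnd ℂ) ⟪π (h⁻¹ * g) ζ₁, x⟫ * ⟪π g ζ₂, f⟫).symm
    _ = ∑' g : G, ⟪(Theta π hproj1 horb1 hpars1 x : ∀ _ : G, ℂ) g,
          (Theta π hproj2 horb2 hpars2 (π h⁻¹ f) : ∀ _ : G, ℂ) g⟫ := (tsum_congr hR).symm

end TwoTheta
end
end S5

set_option maxHeartbeats 4000000 in
theorem stmt5 {G : Type*} [Group G] [Countable G]
    {H : Type*} [NormedAddCommGroup H] [InnerProductSpace ℂ H] [CompleteSpace H]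
    (hG : IsICC G) (π : G →* (H ≃ₗᵢ[ℂ] H)) (N : ℕ) (ξ : Fin (N + 1) → H)
    (hP : ∀ i : Fin (N + 1), i ≠ Fin.last N → IsParsevalFrameVector π (ξ i))
    (hlast : IsParsevalFrameVectorIn π (ξ (Fin.last N)) (orbitSpan π (ξ (Fin.last N))))
    (pr : H →L[ℂ] H) (hpr : IsOrthoProjOnto (orbitSpan π (ξ (Fin.last N))) pr)
    (hdisj : StronglyDisjointTuple π ξ
      (fun i => if i = Fin.last N then orbitSpan π (ξ (Fin.last N)) else ⊤))
    (hnorm : ∑ i, ‖ξ i‖ ^ 2 = 1)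
    (η : H) (Mη : Submodule ℂ H) (hMη : IsClosed (Mη : Set H))
    (hη : IsParsevalFrameVectorIn π η Mη)
    (q : H →L[ℂ] H) (hq : IsOrthoProjOnto Mη q) (hqc : InCommutant π q) :
    (∃! u : Fin (N + 1) → (H →L[ℂ] H),
      (∀ i, InCommutant π (u i)) ∧ (∀ i, q ∘L (u i) = u i) ∧
      (u (Fin.last N)) ∘L pr = u (Fin.last N) ∧
      η = ∑ i, u i (ξ i)) ∧
    (∀ u : Fin (N + 1) → (H →L[ℂ] H),
      (∀ i, InCommutant π (u i)) → (∀ i, q ∘L (u i) = u i) →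
      (u (Fin.last N)) ∘L pr = u (Fin.last N) →
      η = ∑ i, u i (ξ i) →
      ∑ i, (u i) ∘L (ContinuousLinearMap.adjoint (u i)) = q) := by
  classical
  -- abbreviations for the per-coordinate subspaces and projections
  set MM : Fin (N + 1) → Submodule ℂ H :=
    (fun i => if i = Fin.last N then orbitSpan π (ξ (Fin.last N)) else ⊤) with hMM
  set PP : Fin (N + 1) → (H →L[ℂ] H) :=
    (fun i => if i = Fin.last N then pr else ContinuousLinearMap.id ℂ H) with hPP
  have hproj : ∀ i, IsOrthoProjOnto (MM i) (PP i) := by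
    intro i
    by_cases hi : i = Fin.last N
    · simpa [hMM, hPP, hi] using hpr
    · intro x
      refine ⟨by simp [hMM, hi], ?_⟩
      simp [hPP, hi]
  have horb : ∀ (i : Fin (N + 1)) (g : G), π g (ξ i) ∈ MM i := by
    intro i g
    by_cases hi : i = Fin.last N
    · rw [hMM]
      simp only [hi, if_pos rfl]
      exact Submodule.le_topologicalClosure _ (Submodule.subset_span ⟨g, rfl⟩)
    · simp [hMM, hi]
  have hpars : ∀ i, ∀ f ∈ MM i, ∑' g : G, ‖⟪f, π g (ξ i)⟫‖ ^ 2 = ‖f‖ ^ 2 := by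
    intro i f hf
    by_cases hi : i = Fin.last N
    · subst hi
      refine hlast.2 f ?_
      simpa [hMM] using hf
    · exact hP i hi f
  -- the analysis operators
  set Θ : (i : Fin (N + 1)) → (H →L[ℂ] S5.L2 G) :=
    (fun i => S5.Theta π (hproj i) (horb i) (hpars i)) with hΘ
  set Θη : H →L[ℂ] S5.L2 G := S5.Theta π hq hη.1 hη.2 with hΘη
  set u₀ : Fin (N + 1) → (H →L[ℂ] H) :=
    (fun i => (ContinuousLinearMap.adjoint Θη).comp (Θ i)) with hu₀
  -- the delta computation
  have hmemξ : ∀ j, ξ j ∈ MM j := fun j => by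
    simpa using horb j 1
  have h1 : ∑' g : G, ‖∑ i, ⟪ξ i, π g (ξ i)⟫‖ ^ 2 = 1 := (hdisj ξ hmemξ).trans hnorm
  have hc1 : (∑ i, ⟪ξ i, π (1:G) (ξ i)⟫) = 1 := by
    have he : (∑ i, ⟪ξ i, π (1:G) (ξ i)⟫) = ((∑ i, ‖ξ i‖ ^ 2 : ℝ) : ℂ) := by
      push_cast
      refine Finset.sum_congr rfl fun i _ => ?_
      simp [inner_self_eq_norm_sq_to_K]
    rw [he, hnorm]
    norm_num
  have hsum : Summable fun g : G => ‖∑ i, ⟪ξ i, π g (ξ i)⟫‖ ^ 2 := by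
    by_contra hs
    rw [tsum_eq_zero_of_not_summable hs] at h1
    norm_num at h1
  have hdelta0 : ∀ g : G, g ≠ 1 → (∑ i, ⟪ξ i, π g (ξ i)⟫) = 0 := by
    intro g hg
    have hite := Summable.tsum_eq_add_tsum_ite hsum 1
    rw [h1] at hite
    have hc1n : ‖∑ i, ⟪ξ i, π (1:G) (ξ i)⟫‖ ^ 2 = 1 := by rw [hc1]; norm_num
    rw [hc1n] at hite
    have hrest : ∑' (n : G), (if n = 1 then 0 else ‖∑ i, ⟪ξ i, π n (ξ i)⟫‖ ^ 2) = 0 := by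
      linarith
    have hsummable_ite :
        Summable (fun n : G => if n = 1 then 0 else ‖∑ i, ⟪ξ i, π n (ξ i)⟫‖ ^ 2) := by
      refine Summable.of_nonneg_of_le (fun n => ?_) (fun n => ?_) hsum
      · by_cases hn : n = 1 <;> simp [hn, sq_nonneg]
      · by_cases hn : n = 1 <;> simp [hn, sq_nonneg]
    have hterm : ‖∑ i, ⟪ξ i, π g (ξ i)⟫‖ ^ 2 ≤ 0 := by
      have hle := Summable.le_tsum hsummable_ite g (fun b _ => by positivity)
      rw [if_neg hg, hrest] at hle
      exact hle
    have : ‖∑ i, ⟪ξ i, π g (ξ i)⟫‖ = 0 := by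
      nlinarith [norm_nonneg (∑ i, ⟪ξ i, π g (ξ i)⟫)]
    exact norm_eq_zero.mp this
  have hdelta : ∀ g : G, (∑ i, ⟪π g (ξ i), ξ i⟫) = if g = 1 then 1 else 0 := by
    intro g
    have hcs : (∑ i, ⟪π g (ξ i), ξ i⟫) = (starRingEnd ℂ) (∑ i, ⟪ξ i, π g (ξ i)⟫) := by
      rw [map_sum]
      exact Finset.sum_congr rfl fun i _ => (inner_conj_symm _ _).symm
    rw [hcs]
    by_cases hg : g = 1
    · rw [if_pos hg, hg, hc1]; simp
    · rw [if_neg hg, hdelta0 g hg]; simp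
  -- per-orbit delta : ∑ i, Θ i (π h (ξ i)) = lp.single 2 h 1
  have hdeltaVec : ∀ h : G, (∑ i, Θ i (π h (ξ i))) = lp.single 2 h (1:ℂ) := by
    intro h
    apply lp.ext
    funext g
    rw [lp.coeFn_sum, Finset.sum_apply]
    have hterm : ∀ i, (Θ i (π h (ξ i)) : ∀ _ : G, ℂ) g = ⟪π (h⁻¹ * g) (ξ i), ξ i⟫ := by
      intro i
      rw [hΘ]
      rw [S5.Theta_apply]
      rw [← LinearIsometryEquiv.inner_map_map (π h⁻¹) (π g (ξ i)) (π h (ξ i))]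
      rw [S5.pi_pi, S5.pi_pi]
      simp
    rw [Finset.sum_congr rfl (fun i _ => hterm i), hdelta (h⁻¹ * g)]
    by_cases hgh : g = h
    · rw [hgh]
      simp [lp.single_apply_self]
    · rw [lp.single_apply_ne 2 h _ hgh, if_neg]
      simp only [inv_mul_eq_one]
      exact fun hc => hgh (hc.symm)
  -- existence data
  have hcomm₀ : ∀ i, InCommutant π (u₀ i) := by
    intro i g x
    rw [hu₀]
    simp only [ContinuousLinearMap.comp_apply]
    exact S5.adj_theta_comp_theta_commutes π (hproj i) (horb i) (hpars i) hq hη.1 hη.2 g x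
  have hadjη : q ∘L (ContinuousLinearMap.adjoint Θη) = ContinuousLinearMap.adjoint Θη := by
    have hΘq : Θη ∘L q = Θη := by
      refine ContinuousLinearMap.ext fun x => ?_
      rw [ContinuousLinearMap.comp_apply, hΘη]
      exact S5.Theta_proj π hq hη.1 hη.2 x
    calc q ∘L (ContinuousLinearMap.adjoint Θη)
        = (ContinuousLinearMap.adjoint q) ∘L (ContinuousLinearMap.adjoint Θη) := by
          rw [S5.proj_adjoint hq]
      _ = ContinuousLinearMap.adjoint (Θη ∘L q) := (ContinuousLinearMap.adjoint_comp _ _).symm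
      _ = ContinuousLinearMap.adjoint Θη := by rw [hΘq]
  have hqcomp₀ : ∀ i, q ∘L (u₀ i) = u₀ i := by
    intro i
    rw [hu₀]
    simp only []
    rw [← ContinuousLinearMap.comp_assoc, hadjη]
  have hMMlast : MM (Fin.last N) = orbitSpan π (ξ (Fin.last N)) := by simp [hMM]
  have hpr2 : IsOrthoProjOnto (MM (Fin.last N)) pr := by rw [hMMlast]; exact hpr
  have hprcomp₀ : (u₀ (Fin.last N)) ∘L pr = u₀ (Fin.last N) := by
    have hΘpr : (Θ (Fin.last N)) ∘L pr = Θ (Fin.last N) := by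
      refine ContinuousLinearMap.ext fun x => ?_
      rw [ContinuousLinearMap.comp_apply, hΘ]
      exact S5.Theta_proj' π (hproj (Fin.last N)) (horb (Fin.last N)) (hpars (Fin.last N)) hpr2 x
    rw [hu₀]
    simp only []
    rw [ContinuousLinearMap.comp_assoc, hΘpr]
  have hexist : η = ∑ i, u₀ i (ξ i) := by
    have hstep : ∑ i, u₀ i (ξ i) = (ContinuousLinearMap.adjoint Θη) (∑ i, Θ i (ξ i)) := by
      rw [map_sum]
      rfl
    have hD : (∑ i, Θ i (ξ i)) = lp.single 2 (1:G) (1:ℂ) := by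
      have := hdeltaVec 1
      simpa using this
    rw [hstep, hD, hΘη, S5.Theta_adjoint_single π hq hη.1 hη.2 1]
    simp
  -- uniqueness
  have huniq : ∀ u v : Fin (N + 1) → (H →L[ℂ] H),
      (∀ i, InCommutant π (u i)) → (u (Fin.last N)) ∘L pr = u (Fin.last N) →
      η = ∑ i, u i (ξ i) →
      (∀ i, InCommutant π (v i)) → (v (Fin.last N)) ∘L pr = v (Fin.last N) →
      η = ∑ i, v i (ξ i) → u = v := by
    intro u v hcu hpru hdu hcv hprv hdv
    set w : Fin (N + 1) → (H →L[ℂ] H) := fun j => u j - v j with hw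
    have hcw : ∀ j, InCommutant π (w j) := by
      intro j g x
      simp only [hw, ContinuousLinearMap.sub_apply, hcu j g x, hcv j g x, map_sub]
    have hsum0 : ∑ j, w j (ξ j) = 0 := by
      simp only [hw, ContinuousLinearMap.sub_apply, Finset.sum_sub_distrib, ← hdu, ← hdv,
        sub_self]
    have hwpr : (w (Fin.last N)) ∘L pr = w (Fin.last N) := by
      simp only [hw, ContinuousLinearMap.sub_comp, hpru, hprv]
    have hwzero : ∀ j, w j = 0 := by
      have key : ∀ j (x : H), ContinuousLinearMap.adjoint (w j) x = 0 := by
        intro j x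
        set fv : Fin (N + 1) → H := fun j => ContinuousLinearMap.adjoint (w j) x with hfv
        have hmem : ∀ j, fv j ∈ MM j := by
          intro j
          by_cases hj : j = Fin.last N
          · subst hj
            have hadj : ContinuousLinearMap.adjoint (w (Fin.last N))
                = pr ∘L ContinuousLinearMap.adjoint (w (Fin.last N)) := by
              calc ContinuousLinearMap.adjoint (w (Fin.last N))
                  = ContinuousLinearMap.adjoint ((w (Fin.last N)) ∘L pr) := by rw [hwpr]
                _ = (ContinuousLinearMap.adjoint pr) ∘L
                      ContinuousLinearMap.adjoint (w (Fin.last N)) :=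
                    ContinuousLinearMap.adjoint_comp _ _
                _ = pr ∘L ContinuousLinearMap.adjoint (w (Fin.last N)) := by
                    rw [S5.proj_adjoint hpr]
            have : fv (Fin.last N) = pr (ContinuousLinearMap.adjoint (w (Fin.last N)) x) := by
              calc fv (Fin.last N)
                  = ContinuousLinearMap.adjoint (w (Fin.last N)) x := rfl
                _ = (pr ∘L ContinuousLinearMap.adjoint (w (Fin.last N))) x := by rw [← hadj]
                _ = pr (ContinuousLinearMap.adjoint (w (Fin.last N)) x) := rfl
            rw [hMM]
            simp only [if_pos rfl]
            rw [this]
            exact (hpr _).1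
          · simp [hMM, hj]
        have hz := hdisj fv hmem
        have hco : ∀ g : G, ∑ j, ⟪fv j, π g (ξ j)⟫ = 0 := by
          intro g
          have hterm : ∀ j, ⟪fv j, π g (ξ j)⟫ = ⟪x, π g (w j (ξ j))⟫ := by
            intro j
            rw [hfv]
            rw [ContinuousLinearMap.adjoint_inner_left, hcw j g (ξ j)]
          calc ∑ j, ⟪fv j, π g (ξ j)⟫ = ∑ j, ⟪x, π g (w j (ξ j))⟫ :=
                Finset.sum_congr rfl fun j _ => hterm j
            _ = ⟪x, π g (∑ j, w j (ξ j))⟫ := by rw [← inner_sum]; rw [← map_sum]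
            _ = 0 := by rw [hsum0]; simp
        have hlhs : ∑' g : G, ‖∑ j, ⟪fv j, π g (ξ j)⟫‖ ^ 2 = 0 := by
          simp [hco]
        rw [hlhs] at hz
        have hzero : ‖fv j‖ ^ 2 = 0 := by
          have hnn : ∀ j ∈ Finset.univ, (0:ℝ) ≤ ‖fv j‖ ^ 2 := fun _ _ => sq_nonneg _
          exact (Finset.sum_eq_zero_iff_of_nonneg hnn).mp hz.symm j (Finset.mem_univ j)
        have : ‖fv j‖ = 0 := by nlinarith [norm_nonneg (fv j)]
        exact norm_eq_zero.mp this
      intro j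
      refine ContinuousLinearMap.ext fun x => ?_
      refine ext_inner_right ℂ fun y => ?_
      rw [← ContinuousLinearMap.adjoint_inner_right, key j y]
      simp
    funext j
    have := hwzero j
    rw [hw] at this
    simpa [sub_eq_zero] using this
  -- the identity ∑ᵢ Θᵢ Θᵢ* = 1
  have h3g : ∀ (i : Fin (N+1)) (g : G),
      ContinuousLinearMap.adjoint (Θ i) (lp.single 2 g (1:ℂ)) = π g (ξ i) := by
    intro i g
    rw [hΘ]
    exact S5.Theta_adjoint_single π (hproj i) (horb i) (hpars i) g
  have hsa : ∀ i : Fin (N+1), ContinuousLinearMap.adjoint ((Θ i) ∘L (ContinuousLinearMap.adjoint (Θ i)))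
      = (Θ i) ∘L (ContinuousLinearMap.adjoint (Θ i)) := by
    intro i
    rw [ContinuousLinearMap.adjoint_comp, ContinuousLinearMap.adjoint_adjoint]
  have hs : ∀ g : G, ∑ i, ((Θ i) ∘L (ContinuousLinearMap.adjoint (Θ i))) (lp.single 2 g (1:ℂ))
      = lp.single 2 g (1:ℂ) := by
    intro g
    calc ∑ i, ((Θ i) ∘L (ContinuousLinearMap.adjoint (Θ i))) (lp.single 2 g (1:ℂ))
        = ∑ i, (Θ i) (π g (ξ i)) := by
          refine Finset.sum_congr rfl fun i _ => ?_
          rw [ContinuousLinearMap.comp_apply, h3g i g]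
      _ = lp.single 2 g (1:ℂ) := hdeltaVec g
  have hA : ∀ c : S5.L2 G, (∑ i, (Θ i) ∘L (ContinuousLinearMap.adjoint (Θ i))) c = c :=
    S5.sum_id _ hsa hs
  -- the norm-sum identity for the canonical solution
  have hsumq : ∑ i, (u₀ i) ∘L (ContinuousLinearMap.adjoint (u₀ i)) = q := by
    refine ContinuousLinearMap.ext fun x => ?_
    have hadj : ∀ i, ContinuousLinearMap.adjoint (u₀ i)
        = (ContinuousLinearMap.adjoint (Θ i)) ∘L Θη := by
      intro i
      rw [hu₀]
      simp only []
      rw [ContinuousLinearMap.adjoint_comp, ContinuousLinearMap.adjoint_adjoint]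
    rw [ContinuousLinearMap.sum_apply]
    have hterm : ∀ i, ((u₀ i) ∘L (ContinuousLinearMap.adjoint (u₀ i))) x
        = (ContinuousLinearMap.adjoint Θη) ((Θ i) ((ContinuousLinearMap.adjoint (Θ i)) (Θη x))) := by
      intro i
      rw [hadj i, hu₀]
      rfl
    rw [Finset.sum_congr rfl fun i _ => hterm i, ← map_sum]
    have : ∑ i, (Θ i) ((ContinuousLinearMap.adjoint (Θ i)) (Θη x))
        = (∑ i, (Θ i) ∘L (ContinuousLinearMap.adjoint (Θ i))) (Θη x) := by
      rw [ContinuousLinearMap.sum_apply]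
      rfl
    rw [this, hA (Θη x)]
    have := congrArg (fun T : H →L[ℂ] H => T x) (S5.Theta_adjoint_Theta π hq hη.1 hη.2)
    simpa using this
  refine ⟨⟨u₀, ⟨hcomm₀, hqcomp₀, hprcomp₀, hexist⟩, ?_⟩, ?_⟩
  · rintro u ⟨hc, hqc', hprc, hdec⟩
    exact huniq u u₀ hc hprc hdec hcomm₀ hprcomp₀ hexist
  · intro u hc hq' hpr' hdec
    have hud : u = u₀ := huniq u u₀ hc hpr' hdec hcomm₀ hprcomp₀ hexist
    rw [hud]
    exact hsumq
end
end

section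
/- Let G be a countable group and π a unitary representation of G on a complex Hilbert space H. Assume ξ₁,…,ξ_N are Parseval frame vectors for H, ξ_{N+1} is a Parseval frame vector for M := closure(span{π(g)ξ_{N+1} : g ∈ G}) with p_r' the orthogonal projection of H onto M, the (N+1)-tuple ξ₁,…,ξ_{N+1} is strongly disjoint, and ∑_{i=1}^{N+1} ‖ξᵢ‖² = 1. Let q' ∈ π(G)' be an orthogonal projection and let u₁',…,u_{N+1}' ∈ π(G)' satisfy q'uᵢ' = uᵢ' for all i, u_{N+1}'p_r' = u_{N+1}', and ∑_{i=1}^{N+1} uᵢ'(uᵢ')* = q'. Then η := u₁'ξ₁ + ⋯ + u_{N+1}'ξ_{N+1} is a Parseval frame vector for the closed subspace q'H. -/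
noncomputable section

open scoped ComplexConjugate

local notation "⟪" x ", " y "⟫" => @inner ℂ _ _ x y

variable {G : Type*} [Group G]
variable {H : Type*} [NormedAddCommGroup H] [InnerProductSpace ℂ H]

theorem stmt6 {G : Type*} [Group G] [Countable G]
    {H : Type*} [NormedAddCommGroup H] [InnerProductSpace ℂ H] [CompleteSpace H]
    (π : G →* (H ≃ₗᵢ[ℂ] H)) (N : ℕ) (ξ : Fin (N + 1) → H)
    (hP : ∀ i : Fin (N + 1), i ≠ Fin.last N → IsParsevalFrameVector π (ξ i))
    (hlast : IsParsevalFrameVectorIn π (ξ (Fin.last N)) (orbitSpan π (ξ (Fin.last N))))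
    (pr : H →L[ℂ] H) (hpr : IsOrthoProjOnto (orbitSpan π (ξ (Fin.last N))) pr)
    (hdisj : StronglyDisjointTuple π ξ
      (fun i => if i = Fin.last N then orbitSpan π (ξ (Fin.last N)) else ⊤))
    (hnorm : ∑ i, ‖ξ i‖ ^ 2 = 1)
    (Mq : Submodule ℂ H) (hMq : IsClosed (Mq : Set H))
    (q : H →L[ℂ] H) (hq : IsOrthoProjOnto Mq q) (hqc : InCommutant π q)
    (u : Fin (N + 1) → (H →L[ℂ] H))
    (hu : ∀ i, InCommutant π (u i)) (hqu : ∀ i, q ∘L (u i) = u i)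
    (hulast : (u (Fin.last N)) ∘L pr = u (Fin.last N))
    (husum : ∑ i, (u i) ∘L (ContinuousLinearMap.adjoint (u i)) = q) :
    IsParsevalFrameVectorIn π (∑ i, u i (ξ i)) Mq := by
  classical
  set M := orbitSpan π (ξ (Fin.last N)) with hM
  set η := ∑ i, u i (ξ i) with hη
  -- q fixes elements of Mq
  have hqfix : ∀ f ∈ Mq, q f = f := by
    intro f hf
    have h1 := (hq f).1
    have h2 := (hq f).2
    have hmem : f - q f ∈ Mq ⊓ Mqᗮ := ⟨Submodule.sub_mem _ hf h1, h2⟩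
    rw [Submodule.inf_orthogonal_eq_bot, Submodule.mem_bot, sub_eq_zero] at hmem
    exact hmem.symm
  -- pr is self-adjoint
  have hpr_sa : ContinuousLinearMap.adjoint pr = pr := by
    symm
    rw [ContinuousLinearMap.eq_adjoint_iff]
    intro x y
    have h1 : ⟪pr x, y⟫ = ⟪pr x, pr y⟫ := by
      have : ⟪pr x, y - pr y⟫ = 0 := (hpr y).2 (pr x) ((hpr x).1)
      rw [inner_sub_right] at this
      linear_combination this
    have h2 : ⟪x, pr y⟫ = ⟪pr x, pr y⟫ := by
      have : ⟪x - pr x, pr y⟫ = 0 := by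
        have := (hpr x).2
        rw [Submodule.mem_orthogonal] at this
        exact ((inner_eq_zero_symm).mp (this (pr y) ((hpr y).1)))
      rw [inner_sub_left] at this
      linear_combination this
    rw [h1, h2]
  -- range of u_lastᵒ lands in M
  have hadj_last : ∀ f : H, ContinuousLinearMap.adjoint (u (Fin.last N)) f ∈ M := by
    intro f
    have h := congrArg ContinuousLinearMap.adjoint hulast
    rw [ContinuousLinearMap.adjoint_comp, hpr_sa] at h
    have h' : pr (ContinuousLinearMap.adjoint (u (Fin.last N)) f)
        = ContinuousLinearMap.adjoint (u (Fin.last N)) f := by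
      have := congrArg (fun T : H →L[ℂ] H => T f) h
      simpa using this
    rw [← h']
    exact (hpr _).1
  -- q fixes η
  have hqη : q η = η := by
    rw [hη, map_sum]
    refine Finset.sum_congr rfl fun i _ => ?_
    have := congrArg (fun T : H →L[ℂ] H => T (ξ i)) (hqu i)
    simpa using this
  constructor
  · intro g
    have : π g η = q (π g η) := by rw [hqc g η, hqη]
    rw [this]
    exact (hq (π g η)).1
  · intro f hf
    -- rewrite the inner products
    have hinner : ∀ g : G, ⟪f, π g η⟫
        = ∑ i, ⟪ContinuousLinearMap.adjoint (u i) f, π g (ξ i)⟫ := by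
      intro g
      have hπη : (π g : H ≃ₗᵢ[ℂ] H) η = ∑ i, u i (π g (ξ i)) := by
        rw [hη, map_sum]
        exact Finset.sum_congr rfl fun i _ => (hu i g (ξ i)).symm
      rw [hπη, inner_sum]
      exact Finset.sum_congr rfl fun i _ =>
        (ContinuousLinearMap.adjoint_inner_left (u i) (π g (ξ i)) f).symm
    have hmem : ∀ i, ContinuousLinearMap.adjoint (u i) f ∈
        (fun i => if i = Fin.last N then M else (⊤ : Submodule ℂ H)) i := by
      intro i
      by_cases hi : i = Fin.last N
      · simp only [hi, if_pos rfl]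
        exact hadj_last f
      · simp [hi]
    have hsum := hdisj (fun i => ContinuousLinearMap.adjoint (u i) f) hmem
    calc ∑' g : G, ‖⟪f, π g η⟫‖ ^ 2
        = ∑' g : G, ‖∑ i, ⟪ContinuousLinearMap.adjoint (u i) f, π g (ξ i)⟫‖ ^ 2 := by
          exact tsum_congr fun g => by rw [hinner g]
      _ = ∑ i, ‖ContinuousLinearMap.adjoint (u i) f‖ ^ 2 := hsum
      _ = ‖f‖ ^ 2 := by
          have key : ∀ i : Fin (N + 1), ‖ContinuousLinearMap.adjoint (u i) f‖ ^ 2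
              = RCLike.re (⟪f, (u i ∘L ContinuousLinearMap.adjoint (u i)) f⟫) := by
            intro i
            rw [ContinuousLinearMap.comp_apply,
              ← ContinuousLinearMap.adjoint_inner_left (u i)
                (ContinuousLinearMap.adjoint (u i) f) f]
            simp [inner_self_eq_norm_sq]
            norm_cast
          rw [Finset.sum_congr rfl fun i _ => key i]
          have : (∑ i, RCLike.re (⟪f, (u i ∘L ContinuousLinearMap.adjoint (u i)) f⟫))
              = RCLike.re (⟪f, q f⟫) := by
            rw [← husum]
            rw [← map_sum]
            congr 1
            rw [← inner_sum]
            congr 1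
            simp [ContinuousLinearMap.sum_apply]
          rw [this, hqfix f hf]
          simp [inner_self_eq_norm_sq]
          norm_cast
end
end

section
/- Let G be a countable ICC group and π a unitary representation of G on a complex Hilbert space H. Assume ξ₁,…,ξ_N are Parseval frame vectors for H, ξ_{N+1} is a Parseval frame vector for M := closure(span{π(g)ξ_{N+1} : g ∈ G}) with p_r' the orthogonal projection of H onto M, the (N+1)-tuple ξ₁,…,ξ_{N+1} is strongly disjoint, and ∑_{i=1}^{N+1} ‖ξᵢ‖² = 1. Let η = u₁'ξ₁ + ⋯ + u_{N+1}'ξ_{N+1} and ζ = v₁'ξ₁ + ⋯ + v_{N+1}'ξ_{N+1} be Parseval frame vectors for closed subspaces of H, where uᵢ', vᵢ' ∈ π(G)', u_{N+1}'p_r' = u_{N+1}' and v_{N+1}'p_r' = v_{N+1}'. Then η and ζ are strongly disjoint if and only if v₁'(u₁')* + ⋯ + v_{N+1}'(u_{N+1}')* = 0. -/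
noncomputable section

open scoped ComplexConjugate

local notation "⟪" x ", " y "⟫" => @inner ℂ _ _ x y

variable {G : Type*} [Group G]
variable {H : Type*} [NormedAddCommGroup H] [InnerProductSpace ℂ H]

section AuxStmt7

private lemma aux_sum_single7 {k : ℕ} {α : Type*} [AddCommMonoid α] (i : Fin k) (f : Fin k → α)
    (h : ∀ j, j ≠ i → f j = 0) : ∑ j, f j = f i :=
  Finset.sum_eq_single i (fun b _ hb => h b hb) (fun h' => absurd (Finset.mem_univ i) h')

private lemma aux_summable_mul_conj7 {G : Type*} {a b : G → ℂ}
    (ha : Summable fun g => ‖a g‖ ^ 2) (hb : Summable fun g => ‖b g‖ ^ 2) :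
    Summable fun g => a g * (starRingEnd ℂ) (b g) := by
  refine Summable.of_norm ?_
  refine Summable.of_nonneg_of_le (fun g => norm_nonneg _) (fun g => ?_) (ha.add hb)
  have h1 : ‖a g * (starRingEnd ℂ) (b g)‖ = ‖a g‖ * ‖b g‖ := by
    rw [norm_mul, RCLike.norm_conj]
  rw [h1]
  nlinarith [sq_nonneg (‖a g‖ - ‖b g‖), norm_nonneg (a g), norm_nonneg (b g)]

private lemma aux_polar7 {H : Type*} [NormedAddCommGroup H] [InnerProductSpace ℂ H]
    {D : H → H → ℂ}
    (hadd1 : ∀ x y z, D (x + y) z = D x z + D y z)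
    (hadd2 : ∀ x y z, D x (y + z) = D x y + D x z)
    (hI1 : ∀ x y, D ((Complex.I : ℂ) • x) y = -Complex.I * D x y)
    (hI2 : ∀ x y, D x ((Complex.I : ℂ) • y) = Complex.I * D x y)
    (hdiag : ∀ x, D x x = 0) (x y : H) : D x y = 0 := by
  have h1 : D x y + D y x = 0 := by
    have h := hdiag (x + y)
    rw [hadd1, hadd2, hadd2, hdiag, hdiag] at h
    linear_combination h
  have h2 : D x y - D y x = 0 := by
    have h := hdiag (x + Complex.I • y)
    simp only [hadd1, hadd2, hI1, hI2, hdiag, mul_zero, add_zero, zero_add, neg_mul,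
      neg_zero] at h
    linear_combination (-Complex.I) * h + (D x y - D y x) * Complex.I_mul_I
  linear_combination (h1 + h2) / 2

end AuxStmt7

set_option maxHeartbeats 2000000 in
theorem stmt7 {G : Type*} [Group G] [Countable G]
    {H : Type*} [NormedAddCommGroup H] [InnerProductSpace ℂ H] [CompleteSpace H]
    (hG : IsICC G) (π : G →* (H ≃ₗᵢ[ℂ] H)) (N : ℕ) (ξ : Fin (N + 1) → H)
    (hP : ∀ i : Fin (N + 1), i ≠ Fin.last N → IsParsevalFrameVector π (ξ i))
    (hlast : IsParsevalFrameVectorIn π (ξ (Fin.last N)) (orbitSpan π (ξ (Fin.last N))))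
    (pr : H →L[ℂ] H) (hpr : IsOrthoProjOnto (orbitSpan π (ξ (Fin.last N))) pr)
    (hdisj : StronglyDisjointTuple π ξ
      (fun i => if i = Fin.last N then orbitSpan π (ξ (Fin.last N)) else ⊤))
    (hnorm : ∑ i, ‖ξ i‖ ^ 2 = 1)
    (η ζ : H) (Mη Mζ : Submodule ℂ H)
    (hMη : IsClosed (Mη : Set H)) (hMζ : IsClosed (Mζ : Set H))
    (hη : IsParsevalFrameVectorIn π η Mη) (hζ : IsParsevalFrameVectorIn π ζ Mζ)
    (u v : Fin (N + 1) → (H →L[ℂ] H))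
    (hu : ∀ i, InCommutant π (u i)) (hv : ∀ i, InCommutant π (v i))
    (hulast : (u (Fin.last N)) ∘L pr = u (Fin.last N))
    (hvlast : (v (Fin.last N)) ∘L pr = v (Fin.last N))
    (hηdec : η = ∑ i, u i (ξ i)) (hζdec : ζ = ∑ i, v i (ξ i)) :
    StronglyDisjointPairIn π π η ζ Mη Mζ ↔
      ∑ i, (v i) ∘L (ContinuousLinearMap.adjoint (u i)) = 0 := by
  classical
  set Mfam : Fin (N + 1) → Submodule ℂ H :=
    fun i => if i = Fin.last N then orbitSpan π (ξ (Fin.last N)) else ⊤ with hMfam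
  set P : Fin (N + 1) → (H →L[ℂ] H) :=
    fun i => if i = Fin.last N then pr else ContinuousLinearMap.id ℂ H with hPdef
  have hdisj' : ∀ f : Fin (N + 1) → H, (∀ i, f i ∈ Mfam i) →
      ∑' g : G, ‖∑ i, ⟪f i, π g (ξ i)⟫‖ ^ 2 = ∑ i, ‖f i‖ ^ 2 := hdisj
  have hMg : ∀ g : G, π g (ξ (Fin.last N)) ∈ orbitSpan π (ξ (Fin.last N)) := fun g =>
    Submodule.le_topologicalClosure _ (Submodule.subset_span ⟨g, rfl⟩)
  have hPinner : ∀ (i : Fin (N + 1)) (x : H) (g : G),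
      ⟪x, π g (ξ i)⟫ = ⟪P i x, π g (ξ i)⟫ := by
    intro i x g
    by_cases hi : i = Fin.last N
    · subst hi
      have h0 : ⟪x - pr x, π g (ξ (Fin.last N))⟫ = 0 :=
        (Submodule.mem_orthogonal' _ _).mp (hpr x).2 _ (hMg g)
      rw [inner_sub_left, sub_eq_zero] at h0
      simpa [hPdef] using h0
    · simp [hPdef, hi]
  have hPmem : ∀ (i : Fin (N + 1)) (x : H), P i x ∈ Mfam i := by
    intro i x
    by_cases hi : i = Fin.last N
    · subst hi
      simpa [hPdef, hMfam] using (hpr x).1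
    · simp [hMfam, hi]
  have hdisj1 : ∀ (i : Fin (N + 1)) (x : H), x ∈ Mfam i →
      ∑' g : G, ‖⟪x, π g (ξ i)⟫‖ ^ 2 = ‖x‖ ^ 2 := by
    intro i x hx
    have hmem : ∀ j, (Pi.single i x : Fin (N + 1) → H) j ∈ Mfam j := by
      intro j
      by_cases hj : j = i
      · subst hj; simpa using hx
      · rw [Pi.single_eq_of_ne hj]; exact Submodule.zero_mem _
    have h := hdisj' (Pi.single i x : Fin (N + 1) → H) hmem
    have e1 : ∀ g : G, ∑ j, ⟪(Pi.single i x : Fin (N + 1) → H) j, π g (ξ j)⟫ = ⟪x, π g (ξ i)⟫ := by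
      intro g
      rw [aux_sum_single7 i _ (fun j hj => by rw [Pi.single_eq_of_ne hj, inner_zero_left]),
        Pi.single_eq_same]
    have e2 : ∑ j, ‖(Pi.single i x : Fin (N + 1) → H) j‖ ^ 2 = ‖x‖ ^ 2 := by
      rw [aux_sum_single7 i _ (fun j hj => by rw [Pi.single_eq_of_ne hj, norm_zero]; ring),
        Pi.single_eq_same]
    simp only [e1, e2] at h
    exact h
  have htsum_sq : ∀ (i : Fin (N + 1)) (x : H),
      ∑' g : G, ‖⟪x, π g (ξ i)⟫‖ ^ 2 = ‖P i x‖ ^ 2 := by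
    intro i x
    have e : (fun g : G => ‖⟪x, π g (ξ i)⟫‖ ^ 2) = fun g : G => ‖⟪P i x, π g (ξ i)⟫‖ ^ 2 := by
      funext g; rw [hPinner]
    rw [e]
    exact hdisj1 i (P i x) (hPmem i x)
  have hsum_sq : ∀ (i : Fin (N + 1)) (x : H),
      Summable fun g : G => ‖⟪x, π g (ξ i)⟫‖ ^ 2 := by
    intro i x
    by_cases hx : P i x = 0
    · have e : (fun g : G => ‖⟪x, π g (ξ i)⟫‖ ^ 2) = fun _ => (0 : ℝ) := by
        funext g; rw [hPinner, hx, inner_zero_left]; simp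
      rw [e]; exact summable_zero
    · by_contra hns
      have h0 := tsum_eq_zero_of_not_summable hns
      rw [htsum_sq i x] at h0
      exact hx (norm_eq_zero.mp ((pow_eq_zero_iff (two_ne_zero)).mp h0))
  have hzsum : ∀ (i j : Fin (N + 1)) (x y : H),
      Summable fun g : G => ⟪x, π g (ξ i)⟫ * (starRingEnd ℂ) ⟪y, π g (ξ j)⟫ :=
    fun i j x y => aux_summable_mul_conj7 (hsum_sq i x) (hsum_sq j y)
  have hre0 : ∀ (i j : Fin (N + 1)), i ≠ j → ∀ (x y : H),
      ∑' g : G, (⟪x, π g (ξ i)⟫ * (starRingEnd ℂ) ⟪y, π g (ξ j)⟫).re = 0 := by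
    intro i j hij x y
    have hmem : ∀ k, ((Pi.single i (P i x) : Fin (N + 1) → H)
        + (Pi.single j (P j y) : Fin (N + 1) → H)) k ∈ Mfam k := by
      intro k
      rcases eq_or_ne k i with hk | hk
      · subst hk
        have e : ((Pi.single k (P k x) : Fin (N + 1) → H)
            + (Pi.single j (P j y) : Fin (N + 1) → H)) k = P k x := by
          rw [Pi.add_apply, Pi.single_eq_same, Pi.single_eq_of_ne hij, add_zero]
        rw [e]; exact hPmem k x
      · rcases eq_or_ne k j with hk2 | hk2
        · subst hk2
          have e : ((Pi.single i (P i x) : Fin (N + 1) → H)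
              + (Pi.single k (P k y) : Fin (N + 1) → H)) k = P k y := by
            rw [Pi.add_apply, Pi.single_eq_same, Pi.single_eq_of_ne hk, zero_add]
          rw [e]; exact hPmem k y
        · have e : ((Pi.single i (P i x) : Fin (N + 1) → H)
              + (Pi.single j (P j y) : Fin (N + 1) → H)) k = 0 := by
            rw [Pi.add_apply, Pi.single_eq_of_ne hk, Pi.single_eq_of_ne hk2, add_zero]
          rw [e]; exact Submodule.zero_mem _
    have h := hdisj' _ hmem
    have e1 : ∀ g : G, ∑ k, ⟪((Pi.single i (P i x) : Fin (N + 1) → H)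
        + (Pi.single j (P j y) : Fin (N + 1) → H)) k, π g (ξ k)⟫
        = ⟪P i x, π g (ξ i)⟫ + ⟪P j y, π g (ξ j)⟫ := by
      intro g
      have e0 : ∀ k, ⟪((Pi.single i (P i x) : Fin (N + 1) → H)
          + (Pi.single j (P j y) : Fin (N + 1) → H)) k, π g (ξ k)⟫
          = ⟪(Pi.single i (P i x) : Fin (N + 1) → H) k, π g (ξ k)⟫
            + ⟪(Pi.single j (P j y) : Fin (N + 1) → H) k, π g (ξ k)⟫ := by
        intro k; rw [Pi.add_apply, inner_add_left]
      rw [Finset.sum_congr rfl fun k _ => e0 k, Finset.sum_add_distrib,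
        aux_sum_single7 i _ (fun k hk => by rw [Pi.single_eq_of_ne hk, inner_zero_left]),
        aux_sum_single7 j _ (fun k hk => by rw [Pi.single_eq_of_ne hk, inner_zero_left]),
        Pi.single_eq_same, Pi.single_eq_same]
    have e2 : ∑ k, ‖((Pi.single i (P i x) : Fin (N + 1) → H)
        + (Pi.single j (P j y) : Fin (N + 1) → H)) k‖ ^ 2 = ‖P i x‖ ^ 2 + ‖P j y‖ ^ 2 := by
      have hval : ∀ k, ‖((Pi.single i (P i x) : Fin (N + 1) → H)
          + (Pi.single j (P j y) : Fin (N + 1) → H)) k‖ ^ 2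
          = (Pi.single i (‖P i x‖ ^ 2) : Fin (N + 1) → ℝ) k
            + (Pi.single j (‖P j y‖ ^ 2) : Fin (N + 1) → ℝ) k := by
        intro k
        rcases eq_or_ne k i with hk | hk
        · subst hk
          rw [Pi.add_apply, Pi.single_eq_same, Pi.single_eq_of_ne hij, add_zero,
            Pi.single_eq_same, Pi.single_eq_of_ne hij, add_zero]
        · rcases eq_or_ne k j with hk2 | hk2
          · subst hk2
            rw [Pi.add_apply, Pi.single_eq_same, Pi.single_eq_of_ne hk, zero_add,
              Pi.single_eq_same, Pi.single_eq_of_ne hk, zero_add]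
          · rw [Pi.add_apply, Pi.single_eq_of_ne hk, Pi.single_eq_of_ne hk2, add_zero,
              Pi.single_eq_of_ne hk, Pi.single_eq_of_ne hk2, add_zero, norm_zero]
            simp
      rw [Finset.sum_congr rfl fun k _ => hval k, Finset.sum_add_distrib,
        aux_sum_single7 i _ (fun k hk => Pi.single_eq_of_ne hk _),
        aux_sum_single7 j _ (fun k hk => Pi.single_eq_of_ne hk _),
        Pi.single_eq_same, Pi.single_eq_same]
    simp only [e1, e2] at h
    have hA : Summable fun g : G => ‖⟪P i x, π g (ξ i)⟫‖ ^ 2 := hsum_sq i (P i x)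
    have hB : Summable fun g : G => ‖⟪P j y, π g (ξ j)⟫‖ ^ 2 := hsum_sq j (P j y)
    have hRe : Summable fun g : G =>
        2 * (⟪P i x, π g (ξ i)⟫ * (starRingEnd ℂ) ⟪P j y, π g (ξ j)⟫).re := by
      refine Summable.of_norm ?_
      refine Summable.of_nonneg_of_le (fun g => norm_nonneg _) (fun g => ?_) (hA.add hB)
      have h2 : |(⟪P i x, π g (ξ i)⟫ * (starRingEnd ℂ) ⟪P j y, π g (ξ j)⟫).re|
          ≤ ‖⟪P i x, π g (ξ i)⟫‖ * ‖⟪P j y, π g (ξ j)⟫‖ := by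
        calc |(⟪P i x, π g (ξ i)⟫ * (starRingEnd ℂ) ⟪P j y, π g (ξ j)⟫).re|
            ≤ ‖⟪P i x, π g (ξ i)⟫ * (starRingEnd ℂ) ⟪P j y, π g (ξ j)⟫‖ := by
              exact Complex.abs_re_le_norm _
          _ = ‖⟪P i x, π g (ξ i)⟫‖ * ‖⟪P j y, π g (ξ j)⟫‖ := by
              rw [norm_mul, RCLike.norm_conj]
      rw [Real.norm_eq_abs, abs_mul]
      have : |(2 : ℝ)| = 2 := by norm_num
      rw [this]
      nlinarith [sq_nonneg (‖⟪P i x, π g (ξ i)⟫‖ - ‖⟪P j y, π g (ξ j)⟫‖),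
        abs_nonneg ((⟪P i x, π g (ξ i)⟫ * (starRingEnd ℂ) ⟪P j y, π g (ξ j)⟫).re),
        norm_nonneg (⟪P i x, π g (ξ i)⟫), norm_nonneg (⟪P j y, π g (ξ j)⟫)]
    have hexp : ∀ g : G, ‖⟪P i x, π g (ξ i)⟫ + ⟪P j y, π g (ξ j)⟫‖ ^ 2
        = ‖⟪P i x, π g (ξ i)⟫‖ ^ 2
          + 2 * (⟪P i x, π g (ξ i)⟫ * (starRingEnd ℂ) ⟪P j y, π g (ξ j)⟫).re
          + ‖⟪P j y, π g (ξ j)⟫‖ ^ 2 := by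
      intro g
      rw [norm_add_sq (𝕜 := ℂ)]
      have e : RCLike.re (⟪(⟪P i x, π g (ξ i)⟫ : ℂ), (⟪P j y, π g (ξ j)⟫ : ℂ)⟫ : ℂ)
          = (⟪P i x, π g (ξ i)⟫ * (starRingEnd ℂ) ⟪P j y, π g (ξ j)⟫).re := by
        rw [RCLike.inner_apply]
        simp only [RCLike.re_to_complex, Complex.mul_re, Complex.conj_re, Complex.conj_im]
        ring
      rw [e]
    rw [tsum_congr hexp, Summable.tsum_add (hA.add hRe) hB, Summable.tsum_add hA hRe,
      hdisj1 i (P i x) (hPmem i x), hdisj1 j (P j y) (hPmem j y)] at h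
    have egoal : ∀ g : G, (⟪x, π g (ξ i)⟫ * (starRingEnd ℂ) ⟪y, π g (ξ j)⟫).re
        = (⟪P i x, π g (ξ i)⟫ * (starRingEnd ℂ) ⟪P j y, π g (ξ j)⟫).re := by
      intro g; rw [hPinner i x g, hPinner j y g]
    rw [tsum_congr egoal]
    have h5 : ∑' g : G, 2 * (⟪P i x, π g (ξ i)⟫ * (starRingEnd ℂ) ⟪P j y, π g (ξ j)⟫).re
        = 0 := by linarith
    rw [tsum_mul_left] at h5
    linarith
  have hzero : ∀ (i j : Fin (N + 1)), i ≠ j → ∀ (x y : H),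
      ∑' g : G, ⟪x, π g (ξ i)⟫ * (starRingEnd ℂ) ⟪y, π g (ξ j)⟫ = 0 := by
    intro i j hij x y
    have hs := hzsum i j x y
    have hre := hre0 i j hij x y
    have him : ∑' g : G, (⟪x, π g (ξ i)⟫ * (starRingEnd ℂ) ⟪y, π g (ξ j)⟫).im = 0 := by
      have h := hre0 i j hij ((Complex.I : ℂ) • x) y
      have e : ∀ g : G,
          (⟪(Complex.I : ℂ) • x, π g (ξ i)⟫ * (starRingEnd ℂ) ⟪y, π g (ξ j)⟫).re
          = (⟪x, π g (ξ i)⟫ * (starRingEnd ℂ) ⟪y, π g (ξ j)⟫).im := by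
        intro g
        rw [inner_smul_left, Complex.conj_I]
        have e2 : -Complex.I * ⟪x, π g (ξ i)⟫ * (starRingEnd ℂ) ⟪y, π g (ξ j)⟫
            = -Complex.I * (⟪x, π g (ξ i)⟫ * (starRingEnd ℂ) ⟪y, π g (ξ j)⟫) := by ring
        rw [e2]
        simp [Complex.mul_re]
      rw [tsum_congr e] at h
      exact h
    have h1 : (∑' g : G, ⟪x, π g (ξ i)⟫ * (starRingEnd ℂ) ⟪y, π g (ξ j)⟫).re
        = ∑' g : G, (⟪x, π g (ξ i)⟫ * (starRingEnd ℂ) ⟪y, π g (ξ j)⟫).re := by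
      simpa using Complex.reCLM.map_tsum hs
    have h2 : (∑' g : G, ⟪x, π g (ξ i)⟫ * (starRingEnd ℂ) ⟪y, π g (ξ j)⟫).im
        = ∑' g : G, (⟪x, π g (ξ i)⟫ * (starRingEnd ℂ) ⟪y, π g (ξ j)⟫).im := by
      simpa using Complex.imCLM.map_tsum hs
    refine Complex.ext ?_ ?_
    · rw [h1, hre]; simp
    · rw [h2, him]; simp
  have hdiagB : ∀ (i : Fin (N + 1)) (x y : H),
      ∑' g : G, ⟪x, π g (ξ i)⟫ * (starRingEnd ℂ) ⟪y, π g (ξ i)⟫ = ⟪P i x, P i y⟫ := by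
    intro i x y
    refine sub_eq_zero.mp (aux_polar7 (D := fun x y : H =>
      (∑' g : G, ⟪x, π g (ξ i)⟫ * (starRingEnd ℂ) ⟪y, π g (ξ i)⟫) - ⟪P i x, P i y⟫)
      ?_ ?_ ?_ ?_ ?_ x y)
    · intro a b c
      have e : ∀ g : G, ⟪a + b, π g (ξ i)⟫ * (starRingEnd ℂ) ⟪c, π g (ξ i)⟫
          = ⟪a, π g (ξ i)⟫ * (starRingEnd ℂ) ⟪c, π g (ξ i)⟫
            + ⟪b, π g (ξ i)⟫ * (starRingEnd ℂ) ⟪c, π g (ξ i)⟫ := by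
        intro g; rw [inner_add_left, add_mul]
      rw [tsum_congr e, Summable.tsum_add (hzsum i i a c) (hzsum i i b c), map_add, inner_add_left]
      ring
    · intro a b c
      have e : ∀ g : G, ⟪a, π g (ξ i)⟫ * (starRingEnd ℂ) ⟪b + c, π g (ξ i)⟫
          = ⟪a, π g (ξ i)⟫ * (starRingEnd ℂ) ⟪b, π g (ξ i)⟫
            + ⟪a, π g (ξ i)⟫ * (starRingEnd ℂ) ⟪c, π g (ξ i)⟫ := by
        intro g; rw [inner_add_left, map_add, mul_add]
      rw [tsum_congr e, Summable.tsum_add (hzsum i i a b) (hzsum i i a c), map_add, inner_add_right]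
      ring
    · intro a b
      have e : ∀ g : G, ⟪(Complex.I : ℂ) • a, π g (ξ i)⟫ * (starRingEnd ℂ) ⟪b, π g (ξ i)⟫
          = -Complex.I * (⟪a, π g (ξ i)⟫ * (starRingEnd ℂ) ⟪b, π g (ξ i)⟫) := by
        intro g; rw [inner_smul_left, Complex.conj_I]; ring
      rw [tsum_congr e, tsum_mul_left, map_smul, inner_smul_left, Complex.conj_I]
      ring
    · intro a b
      have e : ∀ g : G, ⟪a, π g (ξ i)⟫ * (starRingEnd ℂ) ⟪(Complex.I : ℂ) • b, π g (ξ i)⟫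
          = Complex.I * (⟪a, π g (ξ i)⟫ * (starRingEnd ℂ) ⟪b, π g (ξ i)⟫) := by
        intro g; rw [inner_smul_left, map_mul, Complex.conj_conj]; ring
      rw [tsum_congr e, tsum_mul_left, map_smul, inner_smul_right]
      ring
    · intro a
      have e : ∀ g : G, ⟪a, π g (ξ i)⟫ * (starRingEnd ℂ) ⟪a, π g (ξ i)⟫
          = ((‖⟪a, π g (ξ i)⟫‖ ^ 2 : ℝ) : ℂ) := by
        intro g; rw [RCLike.mul_conj]; norm_cast
      rw [tsum_congr e]
      have h2 : ∑' g : G, ((‖⟪a, π g (ξ i)⟫‖ ^ 2 : ℝ) : ℂ)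
          = ((∑' g : G, ‖⟪a, π g (ξ i)⟫‖ ^ 2 : ℝ) : ℂ) := by
        simpa using (Complex.ofRealCLM.map_tsum (hsum_sq i a)).symm
      rw [h2, htsum_sq i a, inner_self_eq_norm_sq_to_K]
      exact sub_eq_zero.mpr (by norm_cast)
  set T : H →L[ℂ] H := ∑ i, (u i) ∘L (ContinuousLinearMap.adjoint (v i)) with hTdef
  have hadjpr : ContinuousLinearMap.adjoint pr = pr := by
    symm
    rw [ContinuousLinearMap.eq_adjoint_iff]
    intro x y
    have h1 : ⟪pr x, y - pr y⟫ = 0 :=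
      (Submodule.mem_orthogonal _ _).mp (hpr y).2 _ (hpr x).1
    have h2 : ⟪x - pr x, pr y⟫ = 0 :=
      (Submodule.mem_orthogonal' _ _).mp (hpr x).2 _ (hpr y).1
    rw [inner_sub_right, sub_eq_zero] at h1
    rw [inner_sub_left, sub_eq_zero] at h2
    exact h1.trans h2.symm
  have hfix : ∀ w : H →L[ℂ] H, w ∘L pr = w → ∀ b : H,
      pr (ContinuousLinearMap.adjoint w b) = ContinuousLinearMap.adjoint w b := by
    intro w hw b
    have e : ContinuousLinearMap.adjoint w = pr ∘L ContinuousLinearMap.adjoint w := by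
      conv_lhs => rw [← hw]
      rw [ContinuousLinearMap.adjoint_comp, hadjpr]
    conv_rhs => rw [e]
    rfl
  have hS : ∀ a b : H,
      ∑' g : G, ⟪a, π g η⟫ * (starRingEnd ℂ) ⟪b, π g ζ⟫ = ⟪a, T b⟫ := by
    intro a b
    have hηg : ∀ g : G, ⟪a, π g η⟫
        = ∑ i, ⟪ContinuousLinearMap.adjoint (u i) a, π g (ξ i)⟫ := by
      intro g
      rw [hηdec, map_sum, inner_sum]
      refine Finset.sum_congr rfl fun i _ => ?_
      rw [← hu i g (ξ i)]
      exact (ContinuousLinearMap.adjoint_inner_left (u i) (π g (ξ i)) a).symm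
    have hζg : ∀ g : G, ⟪b, π g ζ⟫
        = ∑ i, ⟪ContinuousLinearMap.adjoint (v i) b, π g (ξ i)⟫ := by
      intro g
      rw [hζdec, map_sum, inner_sum]
      refine Finset.sum_congr rfl fun i _ => ?_
      rw [← hv i g (ξ i)]
      exact (ContinuousLinearMap.adjoint_inner_left (v i) (π g (ξ i)) b).symm
    calc ∑' g : G, ⟪a, π g η⟫ * (starRingEnd ℂ) ⟪b, π g ζ⟫
        = ∑' g : G, ∑ i, ∑ j, ⟪ContinuousLinearMap.adjoint (u i) a, π g (ξ i)⟫
            * (starRingEnd ℂ) ⟪ContinuousLinearMap.adjoint (v j) b, π g (ξ j)⟫ := by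
          refine tsum_congr fun g => ?_
          rw [hηg g, hζg g, map_sum, Finset.sum_mul_sum]
      _ = ∑ i, ∑ j, ∑' g : G, ⟪ContinuousLinearMap.adjoint (u i) a, π g (ξ i)⟫
            * (starRingEnd ℂ) ⟪ContinuousLinearMap.adjoint (v j) b, π g (ξ j)⟫ := by
          rw [Summable.tsum_finsetSum fun i _ => summable_sum fun j _ => hzsum i j _ _]
          exact Finset.sum_congr rfl fun i _ => Summable.tsum_finsetSum fun j _ => hzsum i j _ _
      _ = ∑ i, ⟪P i (ContinuousLinearMap.adjoint (u i) a),
            P i (ContinuousLinearMap.adjoint (v i) b)⟫ := by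
          refine Finset.sum_congr rfl fun i _ => ?_
          rw [aux_sum_single7 i _ fun j hj => hzero i j (Ne.symm hj) _ _]
          exact hdiagB i _ _
      _ = ∑ i, ⟪ContinuousLinearMap.adjoint (u i) a,
            ContinuousLinearMap.adjoint (v i) b⟫ := by
          refine Finset.sum_congr rfl fun i _ => ?_
          by_cases hi : i = Fin.last N
          · subst hi
            have eP : P (Fin.last N) = pr := by simp [hPdef]
            rw [eP, hfix (u (Fin.last N)) hulast a, hfix (v (Fin.last N)) hvlast b]
          · have eP : P i = ContinuousLinearMap.id ℂ H := by simp [hPdef, hi]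
            rw [eP]
            rfl
      _ = ⟪a, T b⟫ := by
          rw [hTdef, ContinuousLinearMap.sum_apply, inner_sum]
          refine Finset.sum_congr rfl fun i _ => ?_
          rw [ContinuousLinearMap.comp_apply]
          exact ContinuousLinearMap.adjoint_inner_left (u i)
            (ContinuousLinearMap.adjoint (v i) b) a
  have hadjT : ContinuousLinearMap.adjoint T
      = ∑ i, (v i) ∘L (ContinuousLinearMap.adjoint (u i)) := by
    rw [hTdef, map_sum]
    refine Finset.sum_congr rfl fun i _ => ?_
    rw [ContinuousLinearMap.adjoint_comp, ContinuousLinearMap.adjoint_adjoint]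
  constructor
  · intro hsd
    haveI : CompleteSpace Mη := hMη.completeSpace_coe
    haveI : CompleteSpace Mζ := hMζ.completeSpace_coe
    have hT0 : T = 0 := by
      ext b
      have key : ∀ a : H, ⟪a, T b⟫ = 0 := by
        intro a
        rw [← hS a b]
        have ea : ∀ g : G, ⟪a, π g η⟫ = ⟪((Submodule.orthogonalProjectionOnto Mη a : Mη) : H), π g η⟫ := by
          intro g
          have h0 : ⟪a - ((Submodule.orthogonalProjectionOnto Mη a : Mη) : H), π g η⟫ = 0 :=
            (Submodule.mem_orthogonal' _ _).mp
              (Submodule.sub_starProjection_mem_orthogonal (K := Mη) a) _ (hη.1 g)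
          rwa [inner_sub_left, sub_eq_zero] at h0
        have eb : ∀ g : G, ⟪b, π g ζ⟫ = ⟪((Submodule.orthogonalProjectionOnto Mζ b : Mζ) : H), π g ζ⟫ := by
          intro g
          have h0 : ⟪b - ((Submodule.orthogonalProjectionOnto Mζ b : Mζ) : H), π g ζ⟫ = 0 :=
            (Submodule.mem_orthogonal' _ _).mp
              (Submodule.sub_starProjection_mem_orthogonal (K := Mζ) b) _ (hζ.1 g)
          rwa [inner_sub_left, sub_eq_zero] at h0
        calc ∑' g : G, ⟪a, π g η⟫ * (starRingEnd ℂ) ⟪b, π g ζ⟫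
            = ∑' g : G, ⟪((Submodule.orthogonalProjectionOnto Mη a : Mη) : H), π g η⟫
                * (starRingEnd ℂ) ⟪((Submodule.orthogonalProjectionOnto Mζ b : Mζ) : H), π g ζ⟫ :=
              tsum_congr fun g => by rw [ea g, eb g]
          _ = 0 := hsd _ (SetLike.coe_mem _) _ (SetLike.coe_mem _)
      have h0 := key (T b)
      rw [inner_self_eq_zero] at h0
      simpa using h0
    rw [← hadjT, hT0, map_zero]
  · intro h0
    have hT0 : T = 0 := by
      have e : T = ContinuousLinearMap.adjoint
          (∑ i, (v i) ∘L (ContinuousLinearMap.adjoint (u i))) := by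
        rw [← hadjT, ContinuousLinearMap.adjoint_adjoint]
      rw [e, h0, map_zero]
    intro a ha b hb
    rw [hS a b, hT0]
    simp
end
end

section
/- Let G be a countable ICC group and π a unitary representation of G on a complex Hilbert space H. Assume ξ₁,…,ξ_N are Parseval frame vectors for H, ξ_{N+1} is a Parseval frame vector for M := closure(span{π(g)ξ_{N+1} : g ∈ G}) with p_r' the orthogonal projection of H onto M, the (N+1)-tuple ξ₁,…,ξ_{N+1} is strongly disjoint, and ∑_{i=1}^{N+1} ‖ξᵢ‖² = 1. Let η = u₁'ξ₁ + ⋯ + u_{N+1}'ξ_{N+1} and ζ = v₁'ξ₁ + ⋯ + v_{N+1}'ξ_{N+1} be Parseval frame vectors for closed subspaces of H, where uᵢ', vᵢ' ∈ π(G)', u_{N+1}'p_r' = u_{N+1}' and v_{N+1}'p_r' = v_{N+1}'. Then η and ζ are unitarily equivalent if and only if (uᵢ')*uⱼ' = (vᵢ')*vⱼ' for all i, j ∈ {1,…,N+1}. -/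
noncomputable section

open scoped ComplexConjugate

local notation "⟪" x ", " y "⟫" => @inner ℂ _ _ x y

variable {G : Type*} [Group G]
variable {H : Type*} [NormedAddCommGroup H] [InnerProductSpace ℂ H]

namespace Stmt8Aux

open scoped ENNReal


variable {G : Type*}

lemma summable_norm_sq_of_tsum_eq {f : G → ℂ} {c : ℝ}
    (h : ∑' g, ‖f g‖ ^ 2 = c) (hc : c = 0 → ∀ g, f g = 0) :
    Summable fun g => ‖f g‖ ^ 2 := by
  by_cases hs : Summable fun g => ‖f g‖ ^ 2
  · exact hs
  · have h0 : c = 0 := by rw [← h, tsum_eq_zero_of_not_summable hs]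
    have hz := hc h0
    have : (fun g => ‖f g‖ ^ 2) = fun _ => (0 : ℝ) := funext fun g => by simp [hz g]
    rw [this]; exact summable_zero

lemma summable_mul_of_sq {f h : G → ℂ} (hf : Summable fun g => ‖f g‖ ^ 2)
    (hh : Summable fun g => ‖h g‖ ^ 2) : Summable fun g => f g * h g := by
  apply Summable.of_norm
  have hb := (hf.add hh).mul_left (1 / 2 : ℝ)
  apply Summable.of_nonneg_of_le (fun g => norm_nonneg _) (fun g => ?_) hb
  have h1 : ‖f g * h g‖ = ‖f g‖ * ‖h g‖ := norm_mul _ _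
  nlinarith [sq_nonneg (‖f g‖ - ‖h g‖), norm_nonneg (f g), norm_nonneg (h g)]

lemma norm_add_sq_complex (z w : ℂ) :
    ‖z + w‖ ^ 2 = ‖z‖ ^ 2 + ‖w‖ ^ 2 + 2 * ((starRingEnd ℂ) z * w).re := by
  have h1 : ∀ x : ℂ, ‖x‖ ^ 2 = Complex.normSq x := fun x => by
    rw [← Complex.sq_norm]
  rw [h1, h1, h1, Complex.normSq_add]
  have : (z * (starRingEnd ℂ) w).re = ((starRingEnd ℂ) z * w).re := by
    have := Complex.conj_re ((starRingEnd ℂ) z * w)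
    rw [map_mul, Complex.conj_conj] at this
    rw [← this, mul_comm]
  rw [this]

lemma polar_aux {α β : G → ℂ} {A B : ℝ} {t : ℂ}
    (hA : HasSum (fun g => ‖α g‖ ^ 2) A) (hB : HasSum (fun g => ‖β g‖ ^ 2) B)
    (h1 : ∑' g, ‖α g + β g‖ ^ 2 = A + B + 2 * t.re)
    (h2 : ∑' g, ‖α g + Complex.I * β g‖ ^ 2 = A + B - 2 * t.im) :
    ∑' g, (starRingEnd ℂ) (α g) * β g = t := by
  have hα2 : Summable fun g => ‖(starRingEnd ℂ) (α g)‖ ^ 2 := by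
    simpa using hA.summable
  have hs : Summable fun g => (starRingEnd ℂ) (α g) * β g :=
    summable_mul_of_sq hα2 hB.summable
  set s : ℂ := ∑' g, (starRingEnd ℂ) (α g) * β g with hsdef
  have hre : HasSum (fun g => ((starRingEnd ℂ) (α g) * β g).re) s.re :=
    Complex.hasSum_re hs.hasSum
  have him : HasSum (fun g => ((starRingEnd ℂ) (α g) * β g).im) s.im :=
    Complex.hasSum_im hs.hasSum
  -- real part
  have e1 : (fun g => ‖α g + β g‖ ^ 2)
      = fun g => ‖α g‖ ^ 2 + ‖β g‖ ^ 2 + 2 * ((starRingEnd ℂ) (α g) * β g).re :=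
    funext fun g => norm_add_sq_complex _ _
  have hsum1 : HasSum (fun g => ‖α g‖ ^ 2 + ‖β g‖ ^ 2 + 2 * ((starRingEnd ℂ) (α g) * β g).re)
      (A + B + 2 * s.re) := (hA.add hB).add (hre.mul_left 2)
  have hre_eq : s.re = t.re := by
    have := hsum1.tsum_eq
    rw [← e1, h1] at this
    linarith
  -- imaginary part
  have e2 : (fun g => ‖α g + Complex.I * β g‖ ^ 2)
      = fun g => ‖α g‖ ^ 2 + ‖β g‖ ^ 2 - 2 * ((starRingEnd ℂ) (α g) * β g).im := by
    funext g
    rw [norm_add_sq_complex]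
    have hn : ‖Complex.I * β g‖ ^ 2 = ‖β g‖ ^ 2 := by
      rw [norm_mul, Complex.norm_I, one_mul]
    have hr : ((starRingEnd ℂ) (α g) * (Complex.I * β g)).re
        = -((starRingEnd ℂ) (α g) * β g).im := by
      set z := (starRingEnd ℂ) (α g) * β g with hz
      have : (starRingEnd ℂ) (α g) * (Complex.I * β g) = Complex.I * z := by ring
      rw [this, Complex.mul_re, Complex.I_re, Complex.I_im]
      ring
    rw [hn, hr]; ring
  have hsum2 : HasSum (fun g => ‖α g‖ ^ 2 + ‖β g‖ ^ 2 - 2 * ((starRingEnd ℂ) (α g) * β g).im)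
      (A + B - 2 * s.im) := (hA.add hB).sub (him.mul_left 2)
  have him_eq : s.im = t.im := by
    have := hsum2.tsum_eq
    rw [← e2, h2] at this
    linarith
  exact Complex.ext hre_eq him_eq




variable {G : Type*} [Group G] {H : Type*} [NormedAddCommGroup H] [InnerProductSpace ℂ H]

lemma sum_two {M : Type*} [AddCommMonoid M] {n : ℕ} {i j : Fin n} (hij : i ≠ j)
    (φ : Fin n → M) (hφ : ∀ k, k ≠ i → k ≠ j → φ k = 0) : ∑ k, φ k = φ i + φ j := by
  rw [← Finset.sum_subset (Finset.subset_univ ({i, j} : Finset (Fin n)))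
    (fun x _ hx => by
      simp only [Finset.mem_insert, Finset.mem_singleton] at hx
      push_neg at hx
      exact hφ x hx.1 hx.2)]
  exact Finset.sum_pair hij

lemma inner_proj_left {M : Submodule ℂ H} {p : H →L[ℂ] H} (hp : IsOrthoProjOnto M p)
    {x : H} (hx : x ∈ M) (a : H) : ⟪a, x⟫ = ⟪p a, x⟫ := by
  have h0 : ⟪a - p a, x⟫ = 0 := (Submodule.mem_orthogonal' M _).mp (hp a).2 x hx
  rw [inner_sub_left] at h0
  linear_combination h0

lemma inner_proj_right {M : Submodule ℂ H} {p : H →L[ℂ] H} (hp : IsOrthoProjOnto M p)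
    {x : H} (hx : x ∈ M) (a : H) : ⟪x, a⟫ = ⟪x, p a⟫ := by
  have h0 : ⟪x, a - p a⟫ = 0 := (Submodule.mem_orthogonal M _).mp (hp a).2 x hx
  rw [inner_sub_right] at h0
  linear_combination h0

lemma inner_proj_symm {M : Submodule ℂ H} {p : H →L[ℂ] H} (hp : IsOrthoProjOnto M p)
    (a b : H) : ⟪p a, b⟫ = ⟪a, p b⟫ := by
  rw [inner_proj_right hp (hp a).1 b, ← inner_proj_left hp (hp b).1 a]

lemma proj_eq_self {M : Submodule ℂ H} {p : H →L[ℂ] H} (hp : IsOrthoProjOnto M p)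
    {x : H} (hx : x ∈ M) : p x = x := by
  have h1 : x - p x ∈ M := M.sub_mem hx (hp x).1
  have h2 : ⟪x - p x, x - p x⟫ = 0 := (Submodule.mem_orthogonal' M _).mp (hp x).2 _ h1
  have h3 : x - p x = 0 := inner_self_eq_zero.mp h2
  exact (sub_eq_zero.mp h3).symm

def Psp {H : Type*} [NormedAddCommGroup H] [InnerProductSpace ℂ H]
    (pr : H →L[ℂ] H) (N : ℕ) : Fin (N + 1) → (H →L[ℂ] H) :=
  fun i => if i = Fin.last N then pr else ContinuousLinearMap.id ℂ H

section Rep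

variable (π : G →* (H ≃ₗᵢ[ℂ] H)) {N : ℕ} (ξ : Fin (N + 1) → H) (pr : H →L[ℂ] H)

def Msp : Fin (N + 1) → Submodule ℂ H :=
  fun i => if i = Fin.last N then orbitSpan π (ξ (Fin.last N)) else ⊤

variable {π ξ pr}

lemma mem_Msp (i : Fin (N + 1)) (g : G) : π g (ξ i) ∈ Msp π ξ i := by
  unfold Msp
  split_ifs with h
  · rw [h]
    exact Submodule.le_topologicalClosure _ (Submodule.subset_span ⟨g, rfl⟩)
  · trivial

lemma isOrtho_Psp (hpr : IsOrthoProjOnto (orbitSpan π (ξ (Fin.last N))) pr)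
    (i : Fin (N + 1)) : IsOrthoProjOnto (Msp π ξ i) (Psp pr N i) := by
  unfold Msp Psp
  split_ifs with h
  · exact hpr
  · intro x
    refine ⟨trivial, ?_⟩
    simp

variable (hP : ∀ i : Fin (N + 1), i ≠ Fin.last N → IsParsevalFrameVector π (ξ i))
  (hlast : IsParsevalFrameVectorIn π (ξ (Fin.last N)) (orbitSpan π (ξ (Fin.last N))))
  (hpr : IsOrthoProjOnto (orbitSpan π (ξ (Fin.last N))) pr)
  (hdisj : StronglyDisjointTuple π ξ (Msp π ξ))

include hP hlast in
lemma parseval_Msp (i : Fin (N + 1)) {f : H} (hf : f ∈ Msp π ξ i) :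
    ∑' g : G, ‖⟪f, π g (ξ i)⟫‖ ^ 2 = ‖f‖ ^ 2 := by
  by_cases h : i = Fin.last N
  · subst h
    exact hlast.2 f (by simpa [Msp] using hf)
  · exact hP i h f

include hP hlast in
lemma hasSum_coef_mem (i : Fin (N + 1)) {f : H} (hf : f ∈ Msp π ξ i) :
    HasSum (fun g : G => ‖⟪f, π g (ξ i)⟫‖ ^ 2) (‖f‖ ^ 2) := by
  have h := parseval_Msp hP hlast i hf
  have hs : Summable fun g : G => ‖⟪f, π g (ξ i)⟫‖ ^ 2 := by
    refine summable_norm_sq_of_tsum_eq h fun h0 g => ?_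
    have hf0 : f = 0 := by
      have : ‖f‖ = 0 := by
        have := pow_eq_zero_iff (n := 2) (by norm_num) |>.mp h0
        exact this
      simpa using this
    simp [hf0]
  rw [← h]
  exact hs.hasSum

include hpr in
lemma coef_proj (i : Fin (N + 1)) (a : H) (g : G) :
    ⟪a, π g (ξ i)⟫ = ⟪Psp pr N i a, π g (ξ i)⟫ :=
  inner_proj_left (isOrtho_Psp hpr i) (mem_Msp i g) a

include hP hlast hpr in
lemma summable_coef_sq (i : Fin (N + 1)) (a : H) :
    Summable fun g : G => ‖⟪a, π g (ξ i)⟫‖ ^ 2 := by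
  have he : (fun g : G => ‖⟪a, π g (ξ i)⟫‖ ^ 2)
      = fun g : G => ‖⟪Psp pr N i a, π g (ξ i)⟫‖ ^ 2 :=
    funext fun g => by rw [coef_proj hpr]
  rw [he]
  exact (hasSum_coef_mem hP hlast i (isOrtho_Psp hpr i a).1).summable

include hP hlast hpr hdisj in
lemma core_I (i j : Fin (N + 1)) (a b : H) :
    ∑' g : G, ⟪a, π g (ξ i)⟫ * ⟪π g (ξ j), b⟫
      = if i = j then ⟪Psp pr N i a, b⟫ else 0 := by
  set a' := Psp pr N i a with ha'
  set b' := Psp pr N j b with hb'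
  have ha'm : a' ∈ Msp π ξ i := (isOrtho_Psp hpr i a).1
  have hb'm : b' ∈ Msp π ξ j := (isOrtho_Psp hpr j b).1
  set α : G → ℂ := fun g => ⟪a', π g (ξ i)⟫ with hα
  set β : G → ℂ := fun g => ⟪b', π g (ξ j)⟫ with hβ
  have hA : HasSum (fun g : G => ‖α g‖ ^ 2) (‖a'‖ ^ 2) := hasSum_coef_mem hP hlast i ha'm
  have hB : HasSum (fun g : G => ‖β g‖ ^ 2) (‖b'‖ ^ 2) := hasSum_coef_mem hP hlast j hb'm
  have key : ∑' g : G, (starRingEnd ℂ) (α g) * β g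
      = if i = j then (starRingEnd ℂ) ⟪a', b'⟫ else 0 := by
    by_cases hij : i = j
    · subst hij
      rw [if_pos rfl]
      apply polar_aux hA hB
      · have hsum : ∀ g : G, α g + β g = ⟪a' + b', π g (ξ i)⟫ := fun g =>
          (inner_add_left _ _ _).symm
        have hval := parseval_Msp hP hlast i (Submodule.add_mem _ ha'm hb'm)
        have hnorm : ‖a' + b'‖ ^ 2
            = ‖a'‖ ^ 2 + ‖b'‖ ^ 2 + 2 * ((starRingEnd ℂ) ⟪a', b'⟫).re := by
          have hn := @norm_add_sq ℂ H _ _ _ a' b'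
          rw [hn]
          have : RCLike.re ⟪a', b'⟫ = ((starRingEnd ℂ) ⟪a', b'⟫).re := by
            rw [Complex.conj_re]; rfl
          rw [this]; ring
        calc ∑' g : G, ‖α g + β g‖ ^ 2 = ∑' g : G, ‖⟪a' + b', π g (ξ i)⟫‖ ^ 2 :=
              tsum_congr fun g => by rw [hsum g]
          _ = ‖a' + b'‖ ^ 2 := hval
          _ = ‖a'‖ ^ 2 + ‖b'‖ ^ 2 + 2 * ((starRingEnd ℂ) ⟪a', b'⟫).re := hnorm
      · have hsum : ∀ g : G, α g + Complex.I * β g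
            = ⟪a' + (-Complex.I) • b', π g (ξ i)⟫ := fun g => by
          rw [inner_add_left, inner_smul_left]
          simp [Complex.conj_I]
          rfl
        have hmem : a' + (-Complex.I) • b' ∈ Msp π ξ i :=
          Submodule.add_mem _ ha'm (Submodule.smul_mem _ _ hb'm)
        have hval := parseval_Msp hP hlast i hmem
        have hnorm : ‖a' + (-Complex.I) • b'‖ ^ 2
            = ‖a'‖ ^ 2 + ‖b'‖ ^ 2 - 2 * ((starRingEnd ℂ) ⟪a', b'⟫).im := by
          have hn := @norm_add_sq ℂ H _ _ _ a' ((-Complex.I) • b')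
          rw [hn]
          have h1 : ‖(-Complex.I) • b'‖ = ‖b'‖ := by
            rw [norm_smul]; simp
          have h2 : RCLike.re ⟪a', (-Complex.I) • b'⟫ = (⟪a', b'⟫).im := by
            rw [inner_smul_right]
            have : ((-Complex.I) * ⟪a', b'⟫).re = (⟪a', b'⟫).im := by
              rw [Complex.mul_re]; simp
            rw [← this]; rfl
          have h3 : ((starRingEnd ℂ) ⟪a', b'⟫).im = -(⟪a', b'⟫).im := Complex.conj_im _
          rw [h1, h2, h3]; ring
        calc ∑' g : G, ‖α g + Complex.I * β g‖ ^ 2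
            = ∑' g : G, ‖⟪a' + (-Complex.I) • b', π g (ξ i)⟫‖ ^ 2 :=
              tsum_congr fun g => by rw [hsum g]
          _ = ‖a' + (-Complex.I) • b'‖ ^ 2 := hval
          _ = ‖a'‖ ^ 2 + ‖b'‖ ^ 2 - 2 * ((starRingEnd ℂ) ⟪a', b'⟫).im := hnorm
    · rw [if_neg hij]
      have main : ∀ c : ℂ, ‖c‖ = 1 →
          ∑' g : G, ‖α g + (starRingEnd ℂ) c * β g‖ ^ 2 = ‖a'‖ ^ 2 + ‖b'‖ ^ 2 := by
        intro c hc
        set f : Fin (N + 1) → H := fun k => if k = i then a' else if k = j then c • b' else 0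
          with hf
        have hfm : ∀ k, f k ∈ Msp π ξ k := by
          intro k
          simp only [hf]
          split_ifs with h1 h2
          · subst h1; exact ha'm
          · subst h2; exact Submodule.smul_mem _ _ hb'm
          · exact Submodule.zero_mem _
        have hfi : f i = a' := by simp only [hf, if_pos rfl]
        have hfj : f j = c • b' := by
          simp only [hf]
          rw [if_neg (fun h => hij h.symm)]
          simp
        have hcoef : ∀ g : G, ∑ k, ⟪f k, π g (ξ k)⟫ = α g + (starRingEnd ℂ) c * β g := by
          intro g
          rw [sum_two hij _ (fun k hk1 hk2 => by simp [hf, hk1, hk2])]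
          rw [hfi, hfj, inner_smul_left]
        have hnormsum : ∑ k, ‖f k‖ ^ 2 = ‖a'‖ ^ 2 + ‖b'‖ ^ 2 := by
          rw [sum_two hij _ (fun k hk1 hk2 => by simp [hf, hk1, hk2])]
          rw [hfi, hfj, norm_smul, hc, one_mul]
        have hd := hdisj f hfm
        rw [hnormsum] at hd
        calc ∑' g : G, ‖α g + (starRingEnd ℂ) c * β g‖ ^ 2
            = ∑' g : G, ‖∑ k, ⟪f k, π g (ξ k)⟫‖ ^ 2 := tsum_congr fun g => by rw [hcoef g]
          _ = ‖a'‖ ^ 2 + ‖b'‖ ^ 2 := hd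
      apply polar_aux hA hB
      · have := main 1 (by norm_num)
        simpa using this
      · have := main (-Complex.I) (by simp)
        simp only [map_neg, Complex.conj_I, neg_neg] at this
        simpa using this
  have lhs_eq : ∑' g : G, ⟪a, π g (ξ i)⟫ * ⟪π g (ξ j), b⟫
      = ∑' g : G, α g * (starRingEnd ℂ) (β g) := by
    refine tsum_congr fun g => ?_
    have e1 : ⟪a, π g (ξ i)⟫ = α g := coef_proj hpr i a g
    have e2 : ⟪π g (ξ j), b⟫ = (starRingEnd ℂ) (β g) := by
      rw [hβ]
      have := inner_proj_right (isOrtho_Psp hpr j) (mem_Msp j g) b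
      rw [this, ← inner_conj_symm]
    rw [e1, e2]
  rw [lhs_eq]
  have : ∑' g : G, α g * (starRingEnd ℂ) (β g)
      = (starRingEnd ℂ) (∑' g : G, (starRingEnd ℂ) (α g) * β g) := by
    rw [Complex.conj_tsum]
    exact tsum_congr fun g => by rw [map_mul, Complex.conj_conj]
  rw [this, key]
  split_ifs with hij
  · rw [Complex.conj_conj]
    subst hij
    exact (inner_proj_right (isOrtho_Psp hpr i) ha'm b).symm
  · simp

include hP hlast hpr in
lemma summable_coef_sq' (i : Fin (N + 1)) (x : H) :
    Summable fun g : G => ‖⟪π g (ξ i), x⟫‖ ^ 2 :=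
  (summable_coef_sq hP hlast hpr i x).congr fun g => by rw [norm_inner_symm]

section Cpl

variable [CompleteSpace H] {w : Fin (N + 1) → (H →L[ℂ] H)} {θ : H}
  (hw : ∀ i, InCommutant π (w i)) (hθ : θ = ∑ i, w i (ξ i))
  (hwP : ∀ i x, w i (Psp pr N i x) = w i x)

include hw hθ in
lemma inner_orbit (g : G) (z : H) :
    ⟪z, π g θ⟫ = ∑ k, ⟪ContinuousLinearMap.adjoint (w k) z, π g (ξ k)⟫ := by
  have hπθ : π g θ = ∑ k, w k (π g (ξ k)) := by
    rw [hθ, map_sum]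
    exact Finset.sum_congr rfl fun k _ => (hw k g (ξ k)).symm
  rw [hπθ, inner_sum]
  exact Finset.sum_congr rfl fun k _ => (ContinuousLinearMap.adjoint_inner_left _ _ _).symm

include hw hθ in
lemma inner_orbit' (g : G) (z : H) :
    ⟪π g θ, z⟫ = ∑ k, ⟪π g (ξ k), ContinuousLinearMap.adjoint (w k) z⟫ := by
  have hπθ : π g θ = ∑ k, w k (π g (ξ k)) := by
    rw [hθ, map_sum]
    exact Finset.sum_congr rfl fun k _ => (hw k g (ξ k)).symm
  rw [hπθ, sum_inner]
  exact Finset.sum_congr rfl fun k _ => (ContinuousLinearMap.adjoint_inner_right _ _ _).symm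

include hP hlast hpr hdisj hw hθ hwP in
lemma claim1 (i j : Fin (N + 1)) (x y : H) :
    ⟪ContinuousLinearMap.adjoint (w i) (w j y), x⟫
      = ∑' g : G, ⟪w j y, π g θ⟫ * ⟪π g (ξ i), x⟫ := by
  have hint : ∀ g : G, ⟪w j y, π g θ⟫ * ⟪π g (ξ i), x⟫
      = ∑ k, ⟪ContinuousLinearMap.adjoint (w k) (w j y), π g (ξ k)⟫ * ⟪π g (ξ i), x⟫ :=
    fun g => by rw [inner_orbit hw hθ g (w j y), Finset.sum_mul]
  rw [tsum_congr hint,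
    Summable.tsum_finsetSum (fun k _ => summable_mul_of_sq (summable_coef_sq hP hlast hpr k _)
      (summable_coef_sq' hP hlast hpr i x)),
    Finset.sum_congr rfl (fun k _ => core_I hP hlast hpr hdisj k i _ x),
    Finset.sum_ite_eq' Finset.univ i
      (fun k => ⟪Psp pr N k (ContinuousLinearMap.adjoint (w k) (w j y)), x⟫)]
  simp only [Finset.mem_univ, if_true]
  have hfin : ⟪Psp pr N i (ContinuousLinearMap.adjoint (w i) (w j y)), x⟫
      = ⟪ContinuousLinearMap.adjoint (w i) (w j y), x⟫ := by
    rw [inner_proj_symm (isOrtho_Psp hpr i), ContinuousLinearMap.adjoint_inner_left,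
      ContinuousLinearMap.adjoint_inner_left, hwP i x]
  exact hfin.symm

include hP hlast hpr hdisj hw hθ hwP in
lemma claim2 (g : G) (j : Fin (N + 1)) (y : H) :
    ∑' h : G, ⟪y, π h (ξ j)⟫ * ⟪π h θ, π g θ⟫ = ⟪w j y, π g θ⟫ := by
  have hint : ∀ h : G, ⟪y, π h (ξ j)⟫ * ⟪π h θ, π g θ⟫
      = ∑ k, ⟪y, π h (ξ j)⟫ * ⟪π h (ξ k), ContinuousLinearMap.adjoint (w k) (π g θ)⟫ :=
    fun h => by rw [inner_orbit' hw hθ h (π g θ), Finset.mul_sum]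
  rw [tsum_congr hint,
    Summable.tsum_finsetSum (fun k _ => summable_mul_of_sq (summable_coef_sq hP hlast hpr j y)
      (summable_coef_sq' hP hlast hpr k _)),
    Finset.sum_congr rfl (fun k _ => core_I hP hlast hpr hdisj j k y _),
    Finset.sum_ite_eq Finset.univ j
      (fun k => ⟪Psp pr N j y, ContinuousLinearMap.adjoint (w k) (π g θ)⟫)]
  simp only [Finset.mem_univ, if_true]
  rw [ContinuousLinearMap.adjoint_inner_right, hwP j]

include hP hlast hpr hdisj hw hθ hwP in
lemma key_expand (i j : Fin (N + 1)) (x y : H) :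
    ⟪ContinuousLinearMap.adjoint (w i) (w j y), x⟫
      = ∑' g : G, (∑' h : G, ⟪y, π h (ξ j)⟫ * ⟪π h θ, π g θ⟫) * ⟪π g (ξ i), x⟫ := by
  rw [claim1 hP hlast hpr hdisj hw hθ hwP i j x y]
  exact tsum_congr fun g => by rw [claim2 hP hlast hpr hdisj hw hθ hwP g j y]

end Cpl
end Rep

section Ana

variable [CompleteSpace H] (π : G →* (H ≃ₗᵢ[ℂ] H)) (τ : H) (Mτ : Submodule ℂ H)

lemma Mtau_eq (hMτ : IsClosed (Mτ : Set H)) (hτ : IsParsevalFrameVectorIn π τ Mτ) :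
    Mτ = orbitSpan π τ := by
  have hKM : orbitSpan π τ ≤ Mτ :=
    Submodule.topologicalClosure_minimal _
      (Submodule.span_le.mpr (by rintro x ⟨g, rfl⟩; exact hτ.1 g)) hMτ
  refine le_antisymm ?_ hKM
  intro f hf
  haveI : CompleteSpace ↥(orbitSpan π τ) :=
    (Submodule.isClosed_topologicalClosure _).completeSpace_coe
  set K := orbitSpan π τ with hK
  set wv := f - (Submodule.orthogonalProjectionOnto K f : H) with hwv
  have hwO : wv ∈ Kᗮ := Submodule.sub_starProjection_mem_orthogonal f
  have hwM : wv ∈ Mτ := Mτ.sub_mem hf (hKM (Submodule.orthogonalProjectionOnto K f).2)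
  have hz : ∀ g : G, ⟪wv, π g τ⟫ = 0 := fun g =>
    (Submodule.mem_orthogonal' K wv).mp hwO _
      (Submodule.le_topologicalClosure _ (Submodule.subset_span ⟨g, rfl⟩))
  have h0 : ‖wv‖ ^ 2 = 0 := by
    rw [← hτ.2 wv hwM, tsum_congr (fun g : G => by rw [hz g]; simp : ∀ g : G,
      ‖⟪wv, π g τ⟫‖ ^ 2 = 0)]
    exact tsum_zero
  have hwv0 : wv = 0 := by
    have := pow_eq_zero_iff (n := 2) (by norm_num) |>.mp h0
    simpa using this
  have hfq : f = (Submodule.orthogonalProjectionOnto K f : H) := by rwa [sub_eq_zero] at hwv0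
  rw [hfq]
  exact (Submodule.orthogonalProjectionOnto K f).2

variable {π τ Mτ}

lemma hasSum_tau_coef (hMτ : IsClosed (Mτ : Set H)) (hτ : IsParsevalFrameVectorIn π τ Mτ)
    (f : H) :
    haveI : CompleteSpace ↥Mτ := hMτ.completeSpace_coe
    HasSum (fun g : G => ‖⟪π g τ, f⟫‖ ^ 2) (‖(Submodule.orthogonalProjectionOnto Mτ f : H)‖ ^ 2) := by
  haveI : CompleteSpace ↥Mτ := hMτ.completeSpace_coe
  set q := (Submodule.orthogonalProjectionOnto Mτ f : H) with hq
  have hqm : q ∈ Mτ := (Submodule.orthogonalProjectionOnto Mτ f).2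
  have he0 : ∀ g : G, ⟪π g τ, f⟫ = ⟪π g τ, q⟫ := by
    intro g
    have h0 : ⟪f - q, π g τ⟫ = 0 :=
      (Submodule.mem_orthogonal' Mτ _).mp (Submodule.sub_starProjection_mem_orthogonal f) _
        (hτ.1 g)
    rw [inner_sub_left] at h0
    have h1 : ⟪f, π g τ⟫ = ⟪q, π g τ⟫ := by linear_combination h0
    rw [← inner_conj_symm, h1, inner_conj_symm]
  have he : ∀ g : G, ‖⟪π g τ, f⟫‖ ^ 2 = ‖⟪q, π g τ⟫‖ ^ 2 := fun g => by
    rw [he0 g, norm_inner_symm]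
  have hval : ∑' g : G, ‖⟪π g τ, f⟫‖ ^ 2 = ‖q‖ ^ 2 := by
    rw [tsum_congr he]
    exact hτ.2 q hqm
  have hs : Summable fun g : G => ‖⟪π g τ, f⟫‖ ^ 2 := by
    refine summable_norm_sq_of_tsum_eq hval fun h0 g => ?_
    have hq0 : q = 0 := by
      have : ‖q‖ = 0 := by
        have := pow_eq_zero_iff (n := 2) (by norm_num) |>.mp h0
        exact this
      simpa using this
    rw [he0 g, hq0]
    simp
  rw [← hval]
  exact hs.hasSum

lemma tau_coef_memlp (hMτ : IsClosed (Mτ : Set H)) (hτ : IsParsevalFrameVectorIn π τ Mτ)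
    (f : H) : Memℓp (fun g : G => ⟪π g τ, f⟫) 2 := by
  apply memℓp_gen
  have h2 : ((2 : ℝ≥0∞).toReal) = (2 : ℝ) := by simp
  rw [h2]
  have hs := (hasSum_tau_coef hMτ hτ f).summable
  refine hs.congr fun g => ?_
  rw [← Real.rpow_natCast ‖⟪π g τ, f⟫‖ 2]
  norm_num

lemma lp_norm_sq (x : lp (fun _ : G => ℂ) 2) : ‖x‖ ^ 2 = ∑' g : G, ‖x g‖ ^ 2 := by
  have h2 : (0 : ℝ) < (2 : ℝ≥0∞).toReal := by simp
  have := lp.norm_rpow_eq_tsum h2 x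
  have ha : ‖x‖ ^ ((2 : ℝ≥0∞).toReal) = ‖x‖ ^ (2 : ℕ) := by
    rw [show ((2 : ℝ≥0∞).toReal) = ((2 : ℕ) : ℝ) by simp, Real.rpow_natCast]
  have hb : ∀ g : G, ‖x g‖ ^ ((2 : ℝ≥0∞).toReal) = ‖x g‖ ^ (2 : ℕ) := fun g => by
    rw [show ((2 : ℝ≥0∞).toReal) = ((2 : ℕ) : ℝ) by simp, Real.rpow_natCast]
  rw [ha] at this
  rw [this]
  exact tsum_congr hb

def anaLM (hMτ : IsClosed (Mτ : Set H)) (hτ : IsParsevalFrameVectorIn π τ Mτ) :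
    H →ₗ[ℂ] lp (fun _ : G => ℂ) 2 where
  toFun f := ⟨fun g => ⟪π g τ, f⟫, tau_coef_memlp hMτ hτ f⟩
  map_add' f1 f2 := by
    apply lp.ext
    funext g
    simp only [lp.coeFn_add, Pi.add_apply]
    exact inner_add_right _ _ _
  map_smul' c f := by
    apply lp.ext
    funext g
    simp only [lp.coeFn_smul, Pi.smul_apply, RingHom.id_apply]
    exact inner_smul_right _ _ _

@[simp] lemma anaLM_apply (hMτ : IsClosed (Mτ : Set H))
    (hτ : IsParsevalFrameVectorIn π τ Mτ) (f : H) (g : G) :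
    (anaLM hMτ hτ f : ∀ _ : G, ℂ) g = ⟪π g τ, f⟫ := rfl

lemma anaLM_norm_le (hMτ : IsClosed (Mτ : Set H)) (hτ : IsParsevalFrameVectorIn π τ Mτ)
    (f : H) : ‖anaLM hMτ hτ f‖ ≤ ‖f‖ := by
  haveI : CompleteSpace ↥Mτ := hMτ.completeSpace_coe
  have hsq : ‖anaLM hMτ hτ f‖ ^ 2 = ‖(Submodule.orthogonalProjectionOnto Mτ f : H)‖ ^ 2 := by
    rw [lp_norm_sq]
    exact (hasSum_tau_coef hMτ hτ f).tsum_eq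
  have hle : ‖(Submodule.orthogonalProjectionOnto Mτ f : H)‖ ≤ ‖f‖ := by
    calc ‖(Submodule.orthogonalProjectionOnto Mτ f : H)‖ = ‖Submodule.orthogonalProjectionOnto Mτ f‖ := rfl
      _ ≤ ‖Submodule.orthogonalProjectionOnto Mτ‖ * ‖f‖ := (Submodule.orthogonalProjectionOnto Mτ).le_opNorm f
      _ ≤ 1 * ‖f‖ := mul_le_mul_of_nonneg_right (Submodule.orthogonalProjectionOnto_norm_le _) (norm_nonneg f)
      _ = ‖f‖ := one_mul _
  calc ‖anaLM hMτ hτ f‖ = Real.sqrt (‖anaLM hMτ hτ f‖ ^ 2) := (Real.sqrt_sq (norm_nonneg _)).symm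
    _ = Real.sqrt (‖(Submodule.orthogonalProjectionOnto Mτ f : H)‖ ^ 2) := by rw [hsq]
    _ = ‖(Submodule.orthogonalProjectionOnto Mτ f : H)‖ := Real.sqrt_sq (norm_nonneg _)
    _ ≤ ‖f‖ := hle

def anaCLM (hMτ : IsClosed (Mτ : Set H)) (hτ : IsParsevalFrameVectorIn π τ Mτ) :
    H →L[ℂ] lp (fun _ : G => ℂ) 2 :=
  LinearMap.mkContinuous (anaLM hMτ hτ) 1 fun f => by
    rw [one_mul]
    exact anaLM_norm_le hMτ hτ f

@[simp] lemma anaCLM_apply (hMτ : IsClosed (Mτ : Set H))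
    (hτ : IsParsevalFrameVectorIn π τ Mτ) (f : H) (g : G) :
    (anaCLM hMτ hτ f : ∀ _ : G, ℂ) g = ⟪π g τ, f⟫ := rfl

def anaIso (hMτ : IsClosed (Mτ : Set H)) (hτ : IsParsevalFrameVectorIn π τ Mτ) :
    ↥Mτ →ₗᵢ[ℂ] lp (fun _ : G => ℂ) 2 where
  toLinearMap := (anaLM hMτ hτ).comp (Mτ.subtype)
  norm_map' f := by
    haveI : CompleteSpace ↥Mτ := hMτ.completeSpace_coe
    have hful : ((anaLM hMτ hτ).comp (Mτ.subtype)) f = anaLM hMτ hτ (f : H) := rfl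
    have hqf : (Submodule.orthogonalProjectionOnto Mτ (f : H) : H) = (f : H) :=
      Submodule.starProjection_eq_self_iff.mpr f.2
    have hsq : ‖anaLM hMτ hτ (f : H)‖ ^ 2 = ‖(f : H)‖ ^ 2 := by
      rw [lp_norm_sq]
      have := (hasSum_tau_coef hMτ hτ (f : H)).tsum_eq
      rw [hqf] at this
      exact this
    rw [hful]
    calc ‖anaLM hMτ hτ (f : H)‖ = Real.sqrt (‖anaLM hMτ hτ (f : H)‖ ^ 2) :=
          (Real.sqrt_sq (norm_nonneg _)).symm
      _ = Real.sqrt (‖(f : H)‖ ^ 2) := by rw [hsq]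
      _ = ‖(f : H)‖ := Real.sqrt_sq (norm_nonneg _)

@[simp] lemma anaIso_apply (hMτ : IsClosed (Mτ : Set H))
    (hτ : IsParsevalFrameVectorIn π τ Mτ) (f : ↥Mτ) :
    anaIso hMτ hτ f = anaCLM hMτ hτ (f : H) := rfl

lemma range_ana_eq (hMτ : IsClosed (Mτ : Set H)) (hτ : IsParsevalFrameVectorIn π τ Mτ) :
    LinearMap.range (anaIso hMτ hτ).toLinearMap
      = (Submodule.span ℂ (Set.range fun g : G => anaCLM hMτ hτ (π g τ))).topologicalClosure := by
  haveI : CompleteSpace ↥Mτ := hMτ.completeSpace_coe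
  have hclosed : IsClosed (Set.range (anaIso hMτ hτ)) :=
    ((anaIso hMτ hτ).isometry.isClosedEmbedding).isClosed_range
  apply le_antisymm
  · rintro x ⟨f, rfl⟩
    set T : Submodule ℂ H := (Submodule.span ℂ
        (Set.range fun g : G => anaCLM hMτ hτ (π g τ))).topologicalClosure.comap
        ((anaCLM hMτ hτ) : H →ₗ[ℂ] lp (fun _ : G => ℂ) 2) with hT
    have hTclosed : IsClosed (T : Set H) := by
      have : (T : Set H) = (anaCLM hMτ hτ) ⁻¹' ((Submodule.span ℂ
          (Set.range fun g : G => anaCLM hMτ hτ (π g τ))).topologicalClosure : Set _) := rfl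
      rw [this]
      exact IsClosed.preimage (anaCLM hMτ hτ).continuous
        (Submodule.isClosed_topologicalClosure _)
    have horb : ∀ g : G, π g τ ∈ T := fun g =>
      Submodule.le_topologicalClosure _ (Submodule.subset_span ⟨g, rfl⟩)
    have hMT : Mτ ≤ T := by
      rw [Mtau_eq π τ Mτ hMτ hτ]
      exact Submodule.topologicalClosure_minimal _
        (Submodule.span_le.mpr (by rintro x ⟨g, rfl⟩; exact horb g)) hTclosed
    exact hMT f.2
  · apply Submodule.topologicalClosure_minimal
    · apply Submodule.span_le.mpr
      rintro x ⟨g, rfl⟩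
      exact ⟨⟨π g τ, hτ.1 g⟩, rfl⟩
    · have : (LinearMap.range (anaIso hMτ hτ).toLinearMap : Set (lp (fun _ : G => ℂ) 2))
          = Set.range (anaIso hMτ hτ) := by
        ext z
        simp [LinearMap.mem_range]
      rw [this]
      exact hclosed

end Ana

end Stmt8Aux

open Stmt8Aux

theorem stmt8 {G : Type*} [Group G] [Countable G]
    {H : Type*} [NormedAddCommGroup H] [InnerProductSpace ℂ H] [CompleteSpace H]
    (hG : IsICC G) (π : G →* (H ≃ₗᵢ[ℂ] H)) (N : ℕ) (ξ : Fin (N + 1) → H)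
    (hP : ∀ i : Fin (N + 1), i ≠ Fin.last N → IsParsevalFrameVector π (ξ i))
    (hlast : IsParsevalFrameVectorIn π (ξ (Fin.last N)) (orbitSpan π (ξ (Fin.last N))))
    (pr : H →L[ℂ] H) (hpr : IsOrthoProjOnto (orbitSpan π (ξ (Fin.last N))) pr)
    (hdisj : StronglyDisjointTuple π ξ
      (fun i => if i = Fin.last N then orbitSpan π (ξ (Fin.last N)) else ⊤))
    (hnorm : ∑ i, ‖ξ i‖ ^ 2 = 1)
    (η ζ : H) (Mη Mζ : Submodule ℂ H)
    (hMη : IsClosed (Mη : Set H)) (hMζ : IsClosed (Mζ : Set H))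
    (hη : IsParsevalFrameVectorIn π η Mη) (hζ : IsParsevalFrameVectorIn π ζ Mζ)
    (u v : Fin (N + 1) → (H →L[ℂ] H))
    (hu : ∀ i, InCommutant π (u i)) (hv : ∀ i, InCommutant π (v i))
    (hulast : (u (Fin.last N)) ∘L pr = u (Fin.last N))
    (hvlast : (v (Fin.last N)) ∘L pr = v (Fin.last N))
    (hηdec : η = ∑ i, u i (ξ i)) (hζdec : ζ = ∑ i, v i (ξ i)) :
    (∃ U : ↥Mη ≃ₗᵢ[ℂ] ↥Mζ, ∀ g : G, (U ⟨π g η, hη.1 g⟩ : H) = π g ζ) ↔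
      ∀ i j, (ContinuousLinearMap.adjoint (u i)) ∘L (u j) =
        (ContinuousLinearMap.adjoint (v i)) ∘L (v j) := by
  
  have hdisj' : StronglyDisjointTuple π ξ (Msp π ξ) := hdisj
  have huP : ∀ i x, u i (Psp pr N i x) = u i x := by
    intro i x
    unfold Psp
    split_ifs with h
    · subst h
      exact ContinuousLinearMap.ext_iff.mp hulast x
    · rfl
  have hvP : ∀ i x, v i (Psp pr N i x) = v i x := by
    intro i x
    unfold Psp
    split_ifs with h
    · subst h
      exact ContinuousLinearMap.ext_iff.mp hvlast x
    · rfl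
  constructor
  · rintro ⟨U, hU⟩ i j
    have gram : ∀ g h : G, ⟪π h η, π g η⟫ = ⟪π h ζ, π g ζ⟫ := by
      intro g h
      have h1 := U.inner_map_map ⟨π h η, hη.1 h⟩ ⟨π g η, hη.1 g⟩
      rw [Submodule.coe_inner, Submodule.coe_inner, hU h, hU g] at h1
      exact h1.symm
    apply ContinuousLinearMap.ext
    intro y
    refine ext_inner_right ℂ fun x => ?_
    simp only [ContinuousLinearMap.comp_apply]
    rw [key_expand hP hlast hpr hdisj' hu hηdec huP i j x y,
      key_expand hP hlast hpr hdisj' hv hζdec hvP i j x y]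
    refine tsum_congr fun g => ?_
    congr 1
    refine tsum_congr fun h => ?_
    rw [gram g h]
  · intro hW
    have hπη : ∀ g : G, π g η = ∑ k, u k (π g (ξ k)) := fun g => by
      rw [hηdec, map_sum]
      exact Finset.sum_congr rfl fun k _ => (hu k g (ξ k)).symm
    have hπζ : ∀ g : G, π g ζ = ∑ k, v k (π g (ξ k)) := fun g => by
      rw [hζdec, map_sum]
      exact Finset.sum_congr rfl fun k _ => (hv k g (ξ k)).symm
    have gram : ∀ g h : G, ⟪π h η, π g η⟫ = ⟪π h ζ, π g ζ⟫ := by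
      intro g h
      have e1 : ⟪π h η, π g η⟫ = ∑ l, ∑ k,
          ⟪π h (ξ l), (ContinuousLinearMap.adjoint (u l) ∘L u k) (π g (ξ k))⟫ := by
        rw [hπη h, hπη g, sum_inner]
        refine Finset.sum_congr rfl fun l _ => ?_
        rw [inner_sum]
        refine Finset.sum_congr rfl fun k _ => ?_
        rw [ContinuousLinearMap.comp_apply, ContinuousLinearMap.adjoint_inner_right]
      have e2 : ⟪π h ζ, π g ζ⟫ = ∑ l, ∑ k,
          ⟪π h (ξ l), (ContinuousLinearMap.adjoint (v l) ∘L v k) (π g (ξ k))⟫ := by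
        rw [hπζ h, hπζ g, sum_inner]
        refine Finset.sum_congr rfl fun l _ => ?_
        rw [inner_sum]
        refine Finset.sum_congr rfl fun k _ => ?_
        rw [ContinuousLinearMap.comp_apply, ContinuousLinearMap.adjoint_inner_right]
      rw [e1, e2]
      refine Finset.sum_congr rfl fun l _ => Finset.sum_congr rfl fun k _ => ?_
      rw [hW l k]
    have hgen : ∀ g : G, anaCLM hMη hη (π g η) = anaCLM hMζ hζ (π g ζ) := fun g => by
      apply lp.ext
      funext h
      show ⟪π h η, π g η⟫ = ⟪π h ζ, π g ζ⟫
      exact gram g h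
    have hrange : LinearMap.range (anaIso hMη hη).toLinearMap
        = LinearMap.range (anaIso hMζ hζ).toLinearMap := by
      rw [range_ana_eq hMη hη, range_ana_eq hMζ hζ]
      rw [show (fun g : G => anaCLM hMη hη (π g η)) = fun g : G => anaCLM hMζ hζ (π g ζ) from
        funext hgen]
    refine ⟨((anaIso hMη hη).equivRange.trans
      (LinearIsometryEquiv.ofEq _ _ hrange)).trans (anaIso hMζ hζ).equivRange.symm, fun g => ?_⟩
    have hx : (LinearIsometryEquiv.ofEq _ _ hrange) ((anaIso hMη hη).equivRange ⟨π g η, hη.1 g⟩)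
        = (anaIso hMζ hζ).equivRange ⟨π g ζ, hζ.1 g⟩ := by
      apply Subtype.ext
      rw [LinearIsometryEquiv.coe_ofEq_apply, LinearIsometry.equivRange_apply_coe,
        LinearIsometry.equivRange_apply_coe]
      exact hgen g
    have hfin : (((anaIso hMη hη).equivRange.trans
        (LinearIsometryEquiv.ofEq _ _ hrange)).trans (anaIso hMζ hζ).equivRange.symm)
          ⟨π g η, hη.1 g⟩ = ⟨π g ζ, hζ.1 g⟩ := by
      rw [LinearIsometryEquiv.trans_apply, LinearIsometryEquiv.trans_apply, hx,
        LinearIsometryEquiv.symm_apply_apply]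
    rw [hfin]
end
end

section
/- Let G be a countable group, π a unitary representation of G on a complex Hilbert space H, and N ∈ ℕ. Assume ξ₁ is a Parseval frame vector for H, and ξ₂,…,ξ_{N+1} ∈ H are such that each ξᵢ is a Parseval frame vector for Mᵢ := closure(span{π(g)ξᵢ : g ∈ G}) (with pᵢ' the orthogonal projection of H onto Mᵢ), the vectors ξ₁,…,ξ_{N+1} are mutually strongly disjoint, and there is no nonzero Bessel vector ζ ∈ H that is strongly disjoint from all of ξ₁,…,ξ_{N+1}. Then a vector η ∈ H is a Parseval frame vector for H if and only if there exist u₁',…,u_{N+1}' ∈ π(G)' with uᵢ'pᵢ' = uᵢ' for all i, η = u₁'ξ₁ + ⋯ + u_{N+1}'ξ_{N+1}, and ∑_{i=1}^{N+1} uᵢ'(uᵢ')* = id_H; moreover such operators u₁',…,u_{N+1}' are unique. -/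
noncomputable section

open scoped ComplexConjugate

local notation "⟪" x ", " y "⟫" => @inner ℂ _ _ x y

variable {G : Type*} [Group G]
variable {H : Type*} [NormedAddCommGroup H] [InnerProductSpace ℂ H]

open scoped ENNReal NNReal

set_option linter.unusedSectionVars false


section Infra

variable {G : Type*} [Group G] [Countable G]
variable {H : Type*} [NormedAddCommGroup H] [InnerProductSpace ℂ H] [CompleteSpace H]

lemma rpow_two' (x : ℝ) : x ^ ((2:ℝ≥0∞).toReal) = x ^ 2 := by
  have : ((2:ℝ≥0∞).toReal) = ((2:ℕ):ℝ) := by norm_num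
  rw [this, Real.rpow_natCast]

lemma l2_norm_sq (x : lp (fun _ : G => ℂ) 2) :
    ‖x‖ ^ 2 = ∑' g : G, ‖x g‖ ^ 2 := by
  have h := lp.norm_rpow_eq_tsum (p := 2) (by norm_num) x
  rw [rpow_two'] at h
  simp only [rpow_two'] at h
  exact h

lemma l2_sum_sq_le (x : lp (fun _ : G => ℂ) 2) (s : Finset G) :
    ∑ g ∈ s, ‖x g‖ ^ 2 ≤ ‖x‖ ^ 2 := by
  have h := lp.sum_rpow_le_norm_rpow (p := 2) (by norm_num) x s
  simp only [rpow_two'] at h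
  exact h

variable (π : G →* (H ≃ₗᵢ[ℂ] H))

lemma pi_inv_apply (g : G) (x : H) : π g⁻¹ (π g x) = x := by
  have : π g⁻¹ (π g x) = (π g⁻¹ * π g) x := rfl
  rw [this, ← map_mul, inv_mul_cancel, map_one]
  rfl

lemma inner_pi_pi (g : G) (x y : H) : ⟪π g x, π g y⟫ = ⟪x, y⟫ :=
  (π g).inner_map_map x y

lemma inner_pi_left (g : G) (x y : H) : ⟪π g x, y⟫ = ⟪x, π g⁻¹ y⟫ := by
  rw [← inner_pi_pi π g⁻¹, pi_inv_apply]

/-- A vector whose analysis coefficients are square-summable with constant 1. -/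
def GoodVec (ζ : H) : Prop :=
  ∀ f : H, Summable (fun g : G => ‖⟪π g ζ, f⟫‖ ^ 2) ∧
    ∑' g : G, ‖⟪π g ζ, f⟫‖ ^ 2 ≤ ‖f‖ ^ 2

lemma GoodVec.memℓp {ζ : H} (hζ : GoodVec π ζ) (f : H) :
    Memℓp (fun g : G => ⟪π g ζ, f⟫) 2 := by
  apply memℓp_gen
  simp only [rpow_two']
  exact (hζ f).1

/-- The analysis operator. -/
def anaL {ζ : H} (hζ : GoodVec π ζ) : H →L[ℂ] lp (fun _ : G => ℂ) 2 :=
  LinearMap.mkContinuous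
    { toFun := fun f => (⟨fun g => ⟪π g ζ, f⟫, GoodVec.memℓp π hζ f⟩ : lp (fun _ : G => ℂ) 2)
      map_add' := fun f f' => by
        apply lp.ext
        funext g
        simp only [lp.coeFn_add, Pi.add_apply]
        exact inner_add_right _ _ _
      map_smul' := fun c f => by
        apply lp.ext
        funext g
        simp only [lp.coeFn_smul, Pi.smul_apply, RingHom.id_apply]
        exact inner_smul_right _ _ _ }
    1
    (by
      intro f
      have h1 : ‖(⟨fun g => ⟪π g ζ, f⟫, GoodVec.memℓp π hζ f⟩ : lp (fun _ : G => ℂ) 2)‖ ^ 2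
          ≤ ‖f‖ ^ 2 := by
        rw [l2_norm_sq]
        exact (hζ f).2
      have h2 : (0:ℝ) ≤ ‖(⟨fun g => ⟪π g ζ, f⟫, GoodVec.memℓp π hζ f⟩ :
          lp (fun _ : G => ℂ) 2)‖ := norm_nonneg _
      have h3 : (0:ℝ) ≤ ‖f‖ := norm_nonneg _
      simp only [LinearMap.coe_mk, AddHom.coe_mk, one_mul]
      nlinarith)

@[simp] lemma anaL_apply {ζ : H} (hζ : GoodVec π ζ) (f : H) (g : G) :
    (anaL π hζ f : G → ℂ) g = ⟪π g ζ, f⟫ := rfl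

end Infra
section Part2

variable {G : Type*} [Group G] [Countable G]
variable {H : Type*} [NormedAddCommGroup H] [InnerProductSpace ℂ H] [CompleteSpace H]
variable (π : G →* (H ≃ₗᵢ[ℂ] H))

variable {M : Submodule ℂ H} {p : H →L[ℂ] H}

omit [Group G] [Countable G] π in
lemma proj_inner_left (hp : IsOrthoProjOnto M p) (x y : H) : ⟪p x, y⟫ = ⟪p x, p y⟫ := by
  have h : ⟪p x, y - p y⟫ = 0 := (Submodule.mem_orthogonal M (y - p y)).1 (hp y).2 _ (hp x).1
  have := inner_sub_right (𝕜 := ℂ) (p x) y (p y)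
  rw [h] at this
  linear_combination -this

omit [Group G] [Countable G] π in
lemma proj_selfadj (hp : IsOrthoProjOnto M p) (x y : H) : ⟪p x, y⟫ = ⟪x, p y⟫ := by
  rw [proj_inner_left hp x y]
  have h : ⟪x - p x, p y⟫ = 0 := by
    have := (Submodule.mem_orthogonal M (x - p x)).1 (hp x).2 _ (hp y).1
    rw [← inner_conj_symm, this, map_zero]
  have := inner_sub_left (𝕜 := ℂ) x (p x) (p y)
  rw [h] at this
  linear_combination this

omit [Group G] [Countable G] π in
lemma proj_eq_self (hp : IsOrthoProjOnto M p) {x : H} (hx : x ∈ M) : p x = x := by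
  have hmem : x - p x ∈ M := Submodule.sub_mem M hx (hp x).1
  have h : ⟪x - p x, x - p x⟫ = 0 :=
    (Submodule.mem_orthogonal M (x - p x)).1 (hp x).2 _ hmem
  have := inner_self_eq_zero.1 h
  rw [sub_eq_zero] at this
  exact this.symm

omit [Group G] [Countable G] π in
lemma proj_idem (hp : IsOrthoProjOnto M p) (x : H) : p (p x) = p x :=
  proj_eq_self hp (hp x).1

omit [Group G] [Countable G] π in
lemma proj_norm_le (hp : IsOrthoProjOnto M p) (x : H) : ‖p x‖ ≤ ‖x‖ := by
  have h : ⟪p x, x⟫ = ⟪p x, p x⟫ := proj_inner_left hp x x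
  have h2 : ‖p x‖ ^ 2 = RCLike.re ⟪p x, p x⟫ := (inner_self_eq_norm_sq _).symm
  rw [← h] at h2
  have h3 : RCLike.re ⟪p x, x⟫ ≤ ‖p x‖ * ‖x‖ := re_inner_le_norm _ _
  nlinarith [norm_nonneg (p x), norm_nonneg x]

/-- Parseval frame vector for a subspace gives a `GoodVec`. -/
lemma goodVec_of_in (hξ : IsParsevalFrameVectorIn π ξ0 M) (hp : IsOrthoProjOnto M p) :
    GoodVec π ξ0 := by
  intro f
  have hptwise : ∀ g : G, ⟪π g ξ0, f⟫ = ⟪π g ξ0, p f⟫ := by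
    intro g
    have h : ⟪π g ξ0, f - p f⟫ = 0 :=
      (Submodule.mem_orthogonal M (f - p f)).1 (hp f).2 _ (hξ.1 g)
    have := inner_sub_right (𝕜 := ℂ) (π g ξ0) f (p f)
    rw [h] at this
    linear_combination -this
  have hfun : (fun g : G => ‖⟪π g ξ0, f⟫‖ ^ 2) = fun g : G => ‖⟪p f, π g ξ0⟫‖ ^ 2 := by
    funext g
    rw [hptwise g, norm_inner_symm]
  have htsum : ∑' g : G, ‖⟪p f, π g ξ0⟫‖ ^ 2 = ‖p f‖ ^ 2 := hξ.2 (p f) (hp f).1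
  have hsummable : Summable fun g : G => ‖⟪p f, π g ξ0⟫‖ ^ 2 := by
    by_cases hpf : p f = 0
    · have hz : (fun g : G => ‖⟪p f, π g ξ0⟫‖ ^ 2) = fun _ => 0 := by
        funext g; rw [hpf]; simp
      rw [hz]; exact summable_zero
    · by_contra hns
      rw [tsum_eq_zero_of_not_summable hns] at htsum
      have : ‖p f‖ = 0 := by nlinarith [norm_nonneg (p f)]
      exact hpf (norm_eq_zero.1 this)
  constructor
  · rw [hfun]; exact hsummable
  · rw [hfun, htsum]
    have := proj_norm_le hp f
    nlinarith [norm_nonneg (p f), norm_nonneg f]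

/-- Parseval frame vector for the whole space gives a `GoodVec`. -/
lemma goodVec_of_parseval {η : H} (hη : IsParsevalFrameVector π η) : GoodVec π η := by
  intro f
  have hfun : (fun g : G => ‖⟪π g η, f⟫‖ ^ 2) = fun g : G => ‖⟪f, π g η⟫‖ ^ 2 := by
    funext g; rw [norm_inner_symm]
  have htsum : ∑' g : G, ‖⟪f, π g η⟫‖ ^ 2 = ‖f‖ ^ 2 := hη f
  have hsummable : Summable fun g : G => ‖⟪f, π g η⟫‖ ^ 2 := by
    by_cases hf : f = 0
    · simp only [hf]
      have hz : (fun g : G => ‖⟪(0:H), π g η⟫‖ ^ 2) = fun _ => 0 := by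
        funext g; simp
      rw [hz]; exact summable_zero
    · by_contra hns
      rw [tsum_eq_zero_of_not_summable hns] at htsum
      have : ‖f‖ = 0 := by nlinarith [norm_nonneg f]
      exact hf (norm_eq_zero.1 this)
  constructor
  · rw [hfun]; exact hsummable
  · rw [hfun, htsum]

lemma anaL_proj (hξ : IsParsevalFrameVectorIn π ξ0 M) (hp : IsOrthoProjOnto M p)
    (hg : GoodVec π ξ0) (f : H) : anaL π hg (p f) = anaL π hg f := by
  apply lp.ext
  funext g
  show ⟪π g ξ0, p f⟫ = ⟪π g ξ0, f⟫
  have h : ⟪π g ξ0, f - p f⟫ = 0 :=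
    (Submodule.mem_orthogonal M (f - p f)).1 (hp f).2 _ (hξ.1 g)
  have := inner_sub_right (𝕜 := ℂ) (π g ξ0) f (p f)
  rw [h] at this
  linear_combination this

lemma norm_anaL_in (hξ : IsParsevalFrameVectorIn π ξ0 M) (hp : IsOrthoProjOnto M p)
    (hg : GoodVec π ξ0) (f : H) : ‖anaL π hg f‖ = ‖p f‖ := by
  have h1 : ‖anaL π hg f‖ ^ 2 = ∑' g : G, ‖⟪π g ξ0, f⟫‖ ^ 2 := by
    rw [l2_norm_sq]; rfl
  have hfun : (fun g : G => ‖⟪π g ξ0, f⟫‖ ^ 2) = fun g : G => ‖⟪p f, π g ξ0⟫‖ ^ 2 := by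
    funext g
    have h : ⟪π g ξ0, f - p f⟫ = 0 :=
      (Submodule.mem_orthogonal M (f - p f)).1 (hp f).2 _ (hξ.1 g)
    have h2 := inner_sub_right (𝕜 := ℂ) (π g ξ0) f (p f)
    rw [h] at h2
    have h3 : ⟪π g ξ0, f⟫ = ⟪π g ξ0, p f⟫ := by linear_combination -h2
    rw [h3, norm_inner_symm]
  rw [hfun] at h1
  rw [hξ.2 (p f) (hp f).1] at h1
  nlinarith [norm_nonneg (anaL π hg f), norm_nonneg (p f)]

lemma norm_anaL_full {η : H} (hη : IsParsevalFrameVector π η)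
    (hg : GoodVec π η) (f : H) : ‖anaL π hg f‖ = ‖f‖ := by
  have h1 : ‖anaL π hg f‖ ^ 2 = ∑' g : G, ‖⟪π g η, f⟫‖ ^ 2 := by
    rw [l2_norm_sq]; rfl
  have hfun : (fun g : G => ‖⟪π g η, f⟫‖ ^ 2) = fun g : G => ‖⟪f, π g η⟫‖ ^ 2 := by
    funext g; rw [norm_inner_symm]
  rw [hfun, hη f] at h1
  nlinarith [norm_nonneg (anaL π hg f), norm_nonneg f]

/-- Polarization: two operators with equal norms of images have equal inner products. -/
lemma inner_map_eq_of_norm_eq {E F : Type*} [NormedAddCommGroup E] [InnerProductSpace ℂ E]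
    [NormedAddCommGroup F] [InnerProductSpace ℂ F]
    (T : H →L[ℂ] E) (S : H →L[ℂ] F) (h : ∀ f, ‖T f‖ = ‖S f‖) (f f' : H) :
    ⟪T f, T f'⟫ = ⟪S f, S f'⟫ := by
  rw [inner_eq_sum_norm_sq_div_four, inner_eq_sum_norm_sq_div_four]
  simp only [← map_smul, ← map_add, ← map_sub, h]

end Part2
section Part3

variable {G : Type*} [Group G] [Countable G]
variable {H : Type*} [NormedAddCommGroup H] [InnerProductSpace ℂ H] [CompleteSpace H]
variable (π : G →* (H ≃ₗᵢ[ℂ] H))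

/-- Intertwining property of the analysis operators. -/
lemma inner_anaL_shift {ζ1 ζ2 : H} (h1 : GoodVec π ζ1) (h2 : GoodVec π ζ2)
    (g : G) (x y : H) :
    ⟪anaL π h1 (π g x), anaL π h2 y⟫ = ⟪anaL π h1 x, anaL π h2 (π g⁻¹ y)⟫ := by
  rw [lp.inner_eq_tsum, lp.inner_eq_tsum]
  rw [← Equiv.tsum_eq (Equiv.mulLeft g)
    (fun h : G => ⟪(anaL π h1 (π g x) : G → ℂ) h, (anaL π h2 y : G → ℂ) h⟫)]
  congr 1
  funext h
  show ⟪(⟪π (g * h) ζ1, π g x⟫ : ℂ), (⟪π (g * h) ζ2, y⟫ : ℂ)⟫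
      = ⟪(⟪π h ζ1, x⟫ : ℂ), (⟪π h ζ2, π g⁻¹ y⟫ : ℂ)⟫
  have e1 : ⟪π (g * h) ζ1, π g x⟫ = ⟪π h ζ1, x⟫ := by
    rw [map_mul]
    exact inner_pi_pi π g _ _
  have e2 : ⟪π (g * h) ζ2, y⟫ = ⟪π h ζ2, π g⁻¹ y⟫ := by
    rw [map_mul]
    have : (π g * π h) ζ2 = π g (π h ζ2) := rfl
    rw [this, inner_pi_left]
  rw [e1, e2]

/-- Strong disjointness gives vanishing cross inner products of analysis images. -/
lemma inner_anaL_disjoint {ξ1 ξ2 : H} {M1 M2 : Submodule ℂ H} {p1 p2 : H →L[ℂ] H}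
    (hξ1 : IsParsevalFrameVectorIn π ξ1 M1) (hp1 : IsOrthoProjOnto M1 p1)
    (hξ2 : IsParsevalFrameVectorIn π ξ2 M2) (hp2 : IsOrthoProjOnto M2 p2)
    (hg1 : GoodVec π ξ1) (hg2 : GoodVec π ξ2)
    (hd : StronglyDisjointPairIn π π ξ1 ξ2 M1 M2) (f f' : H) :
    ⟪anaL π hg1 f, anaL π hg2 f'⟫ = 0 := by
  rw [← anaL_proj π hξ1 hp1 hg1 f, ← anaL_proj π hξ2 hp2 hg2 f']
  rw [lp.inner_eq_tsum]
  have hfun : (fun g : G => ⟪(anaL π hg1 (p1 f) : G → ℂ) g, (anaL π hg2 (p2 f') : G → ℂ) g⟫)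
      = fun g : G => ⟪p1 f, π g ξ1⟫ * (starRingEnd ℂ) ⟪p2 f', π g ξ2⟫ := by
    funext g
    show ⟪(⟪π g ξ1, p1 f⟫ : ℂ), (⟪π g ξ2, p2 f'⟫ : ℂ)⟫
        = ⟪p1 f, π g ξ1⟫ * (starRingEnd ℂ) ⟪p2 f', π g ξ2⟫
    rw [RCLike.inner_apply, ← inner_conj_symm (p1 f) (π g ξ1),
      ← inner_conj_symm (π g ξ2) (p2 f')]
    exact mul_comm _ _
  rw [hfun]
  exact hd (p1 f) (hp1 f).1 (p2 f') (hp2 f').1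

/-- `Θ* Θ = p` for a Parseval frame vector of a subspace. -/
lemma adj_anaL_anaL_in {ξ0 : H} {M : Submodule ℂ H} {p : H →L[ℂ] H}
    (hξ : IsParsevalFrameVectorIn π ξ0 M) (hp : IsOrthoProjOnto M p)
    (hg : GoodVec π ξ0) (f : H) :
    ContinuousLinearMap.adjoint (anaL π hg) (anaL π hg f) = p f := by
  apply ext_inner_left ℂ
  intro x
  rw [ContinuousLinearMap.adjoint_inner_right]
  rw [inner_map_eq_of_norm_eq (anaL π hg) p (norm_anaL_in π hξ hp hg) x f]
  rw [proj_selfadj hp x (p f), proj_idem hp]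

lemma adj_anaL_anaL_disjoint {ξ1 ξ2 : H} {M1 M2 : Submodule ℂ H} {p1 p2 : H →L[ℂ] H}
    (hξ1 : IsParsevalFrameVectorIn π ξ1 M1) (hp1 : IsOrthoProjOnto M1 p1)
    (hξ2 : IsParsevalFrameVectorIn π ξ2 M2) (hp2 : IsOrthoProjOnto M2 p2)
    (hg1 : GoodVec π ξ1) (hg2 : GoodVec π ξ2)
    (hd : StronglyDisjointPairIn π π ξ1 ξ2 M1 M2) (f : H) :
    ContinuousLinearMap.adjoint (anaL π hg2) (anaL π hg1 f) = 0 := by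
  apply ext_inner_left ℂ
  intro x
  rw [ContinuousLinearMap.adjoint_inner_right, inner_zero_right]
  rw [← inner_conj_symm (anaL π hg2 x) (anaL π hg1 f)]
  rw [inner_anaL_disjoint π hξ1 hp1 hξ2 hp2 hg1 hg2 hd f x]
  simp

/-- `Θ* Θ = 1` for a Parseval frame vector of the whole space. -/
lemma adj_anaL_anaL_full {η : H} (hη : IsParsevalFrameVector π η)
    (hg : GoodVec π η) (f : H) :
    ContinuousLinearMap.adjoint (anaL π hg) (anaL π hg f) = f := by
  apply ext_inner_left ℂ
  intro x
  rw [ContinuousLinearMap.adjoint_inner_right]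
  exact inner_map_eq_of_norm_eq (anaL π hg) (ContinuousLinearMap.id ℂ H)
    (fun f => norm_anaL_full π hη hg f) x f

/-- The adjoint of the analysis operator on `lp.single`. -/
lemma adj_anaL_single [DecidableEq G] {ζ : H} (hg : GoodVec π ζ) (g : G) :
    ContinuousLinearMap.adjoint (anaL π hg) (lp.single 2 g (1:ℂ)) = π g ζ := by
  apply ext_inner_left ℂ
  intro x
  rw [ContinuousLinearMap.adjoint_inner_right]
  rw [lp.inner_single_right]
  show ⟪(⟪π g ζ, x⟫ : ℂ), (1:ℂ)⟫ = ⟪x, π g ζ⟫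
  rw [RCLike.inner_apply, ← inner_conj_symm (π g ζ) x]
  simp

end Part3
section Part4

variable {G : Type*} [Group G] [Countable G]
variable {H : Type*} [NormedAddCommGroup H] [InnerProductSpace ℂ H] [CompleteSpace H]
variable (π : G →* (H ≃ₗᵢ[ℂ] H)) {N : ℕ} (ξ : Fin (N + 1) → H)
  (p : Fin (N + 1) → (H →L[ℂ] H))
variable (hξ : ∀ i, IsParsevalFrameVectorIn π (ξ i) (orbitSpan π (ξ i)))
variable (hp : ∀ i, IsOrthoProjOnto (orbitSpan π (ξ i)) (p i))
variable (hdisj : ∀ i j, i ≠ j → StronglyDisjointPairIn π π (ξ i) (ξ j)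
      (orbitSpan π (ξ i)) (orbitSpan π (ξ j)))

/-- The analysis operator of `ξ i`. -/
def Th (i : Fin (N + 1)) : H →L[ℂ] lp (fun _ : G => ℂ) 2 :=
  anaL π (goodVec_of_in π (hξ i) (hp i))

local notation "Θ" => Th π ξ p hξ hp

lemma Th_apply (i : Fin (N + 1)) (f : H) (g : G) :
    (Θ i f : G → ℂ) g = ⟪π g (ξ i), f⟫ := rfl

lemma Th_proj (i : Fin (N + 1)) (f : H) : Θ i (p i f) = Θ i f :=
  anaL_proj π (hξ i) (hp i) _ f

lemma adjTh_Th_same (i : Fin (N + 1)) (f : H) :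
    ContinuousLinearMap.adjoint (Θ i) (Θ i f) = p i f :=
  adj_anaL_anaL_in π (hξ i) (hp i) _ f

include hdisj in
lemma adjTh_Th_ne {i j : Fin (N + 1)} (hij : i ≠ j) (f : H) :
    ContinuousLinearMap.adjoint (Θ j) (Θ i f) = 0 :=
  adj_anaL_anaL_disjoint π (hξ i) (hp i) (hξ j) (hp j) _ _ (hdisj i j hij) f

include hdisj in
lemma inner_Th_Th_ne {i j : Fin (N + 1)} (hij : i ≠ j) (f f' : H) :
    ⟪Θ i f, Θ j f'⟫ = 0 :=
  inner_anaL_disjoint π (hξ i) (hp i) (hξ j) (hp j) _ _ (hdisj i j hij) f f'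

lemma inner_Th_Th_same (i : Fin (N + 1)) (f f' : H) :
    ⟪Θ i f, Θ i f'⟫ = ⟪p i f, p i f'⟫ :=
  inner_map_eq_of_norm_eq (Θ i) (p i) (norm_anaL_in π (hξ i) (hp i) _) f f'

lemma adjTh_single [DecidableEq G] (i : Fin (N + 1)) (g : G) :
    ContinuousLinearMap.adjoint (Θ i) (lp.single 2 g (1:ℂ)) = π g (ξ i) :=
  adj_anaL_single π (goodVec_of_in π (hξ i) (hp i)) g

lemma inner_Th_shift {ζ2 : H} (hg2 : GoodVec π ζ2) (i : Fin (N + 1)) (g : G) (x y : H) :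
    ⟪Θ i (π g x), anaL π hg2 y⟫ = ⟪Θ i x, anaL π hg2 (π g⁻¹ y)⟫ :=
  inner_anaL_shift π (goodVec_of_in π (hξ i) (hp i)) hg2 g x y

/-- The operator `Q = ∑ Θᵢ Θᵢ*`. -/
def Qop : (lp (fun _ : G => ℂ) 2) →L[ℂ] lp (fun _ : G => ℂ) 2 :=
  ∑ i, (Θ i) ∘L (ContinuousLinearMap.adjoint (Θ i))

local notation "Q" => Qop π ξ p hξ hp

lemma Qop_apply (z : lp (fun _ : G => ℂ) 2) :
    Q z = ∑ i, Θ i (ContinuousLinearMap.adjoint (Θ i) z) := by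
  rw [Qop, ContinuousLinearMap.sum_apply]
  rfl

include hdisj in
lemma Qop_th (i : Fin (N + 1)) (f : H) : Q (Θ i f) = Θ i f := by
  rw [Qop_apply]
  rw [Finset.sum_eq_single i]
  · rw [adjTh_Th_same, Th_proj]
  · intro j _ hj
    rw [adjTh_Th_ne π ξ p hξ hp hdisj (Ne.symm hj), map_zero]
  · intro h; exact absurd (Finset.mem_univ i) h

lemma Qop_selfadj (z w : lp (fun _ : G => ℂ) 2) : ⟪Q z, w⟫ = ⟪z, Q w⟫ := by
  rw [Qop_apply, Qop_apply, sum_inner, inner_sum]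
  apply Finset.sum_congr rfl
  intro i _
  rw [(ContinuousLinearMap.adjoint_inner_right (Θ i) _ w).symm]
  rw [ContinuousLinearMap.adjoint_inner_left]

include hdisj in
lemma Qop_idem (z : lp (fun _ : G => ℂ) 2) : Q (Q z) = Q z := by
  conv_lhs => rw [Qop_apply π ξ p hξ hp z]
  rw [map_sum]
  conv_rhs => rw [Qop_apply π ξ p hξ hp z]
  apply Finset.sum_congr rfl
  intro i _
  exact Qop_th π ξ p hξ hp hdisj i _

include hdisj in
lemma norm_sub_Qop_le (z : lp (fun _ : G => ℂ) 2) : ‖z - Q z‖ ≤ ‖z‖ := by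
  set w := z - Q z with hw
  have h1 : Q w = 0 := by
    rw [hw, map_sub, Qop_idem π ξ p hξ hp hdisj, sub_self]
  have h2 : ⟪w, w⟫ = ⟪w, z⟫ := by
    have h3 : ⟪w, Q z⟫ = ⟪Q w, z⟫ := (Qop_selfadj π ξ p hξ hp w z).symm
    rw [hw]
    rw [inner_sub_right (𝕜 := ℂ) (z - Q z) z (Q z)]
    rw [← hw, h3, h1, inner_zero_left, sub_zero]
  have h4 : ‖w‖ ^ 2 = RCLike.re ⟪w, z⟫ := by
    rw [← h2, inner_self_eq_norm_sq]
  have h5 : RCLike.re ⟪w, z⟫ ≤ ‖w‖ * ‖z‖ := re_inner_le_norm _ _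
  nlinarith [norm_nonneg w, norm_nonneg z]

end Part4
section Part5

variable {G : Type*} [Group G] [Countable G]
variable {H : Type*} [NormedAddCommGroup H] [InnerProductSpace ℂ H] [CompleteSpace H]
variable (π : G →* (H ≃ₗᵢ[ℂ] H)) {N : ℕ} (ξ : Fin (N + 1) → H)
  (p : Fin (N + 1) → (H →L[ℂ] H))
variable (hξ : ∀ i, IsParsevalFrameVectorIn π (ξ i) (orbitSpan π (ξ i)))
variable (hp : ∀ i, IsOrthoProjOnto (orbitSpan π (ξ i)) (p i))
variable (hdisj : ∀ i j, i ≠ j → StronglyDisjointPairIn π π (ξ i) (ξ j)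
      (orbitSpan π (ξ i)) (orbitSpan π (ξ j)))
variable (hmax : ∀ ζ : H, IsBesselVector π ζ →
      (∀ i, StronglyDisjointPairIn π π ζ (ξ i) ⊤ (orbitSpan π (ξ i))) → ζ = 0)
variable {η : H} (hgη : GoodVec π η)

local notation "Θ" => Th π ξ p hξ hp
local notation "Q" => Qop π ξ p hξ hp
local notation "Θη" => anaL π hgη

lemma pi_one_apply (x : H) : π (1 : G) x = x := by
  rw [map_one]
  rfl

/-- Key pointwise identity for the "residual" vector `ζ`. -/
lemma zeta_pointwise [DecidableEq G]
    (ζ : H) (hζ : ζ = ContinuousLinearMap.adjoint Θη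
      (lp.single 2 (1 : G) (1:ℂ) - Q (lp.single 2 (1 : G) (1:ℂ))))
    (f : H) (g : G) :
    ⟪π g ζ, f⟫ = (Θη f : G → ℂ) g - (Q (Θη f) : G → ℂ) g := by
  rw [inner_pi_left, hζ, ContinuousLinearMap.adjoint_inner_left, inner_sub_left]
  have term1 : ⟪lp.single 2 (1 : G) (1:ℂ), Θη (π g⁻¹ f)⟫ = (Θη f : G → ℂ) g := by
    rw [lp.inner_single_left]
    show ⟪(1:ℂ), ⟪π (1:G) η, π g⁻¹ f⟫⟫ = ⟪π g η, f⟫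
    rw [RCLike.inner_apply, pi_one_apply, map_one, mul_one, ← inner_pi_left]
  have term2 : ⟪Q (lp.single 2 (1 : G) (1:ℂ)), Θη (π g⁻¹ f)⟫ = (Q (Θη f) : G → ℂ) g := by
    rw [Qop_apply, Qop_apply, sum_inner]
    have hcoe : ((∑ i, Θ i (ContinuousLinearMap.adjoint (Θ i) (Θη f)) :
        lp (fun _ : G => ℂ) 2) : G → ℂ) g
        = ∑ i, ((Θ i (ContinuousLinearMap.adjoint (Θ i) (Θη f)) : lp (fun _ : G => ℂ) 2) : G → ℂ) g := by
      rw [lp.coeFn_sum]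
      simp
    rw [hcoe]
    apply Finset.sum_congr rfl
    intro i _
    rw [adjTh_single π ξ p hξ hp i (1:G)]
    have e1 : π (1:G) (ξ i) = ξ i := pi_one_apply π _
    rw [e1]
    have e2 : ⟪Θ i (ξ i), Θη (π g⁻¹ f)⟫ = ⟪Θ i (π g (ξ i)), Θη f⟫ :=
      (inner_Th_shift π ξ p hξ hp hgη i g (ξ i) f).symm
    rw [e2]
    rw [(ContinuousLinearMap.adjoint_inner_right (Θ i) (π g (ξ i)) (Θη f)).symm]
    rfl
  rw [term1, term2]

include hξ hp hdisj hmax hgη in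
lemma Qop_fix_eta (hηnorm : ∀ f : H, ‖Θη f‖ = ‖f‖) (f : H) : Q (Θη f) = Θη f := by
  classical
  set δ : lp (fun _ : G => ℂ) 2 := lp.single 2 (1 : G) (1:ℂ) with hδ
  set ζ := ContinuousLinearMap.adjoint Θη (δ - Q δ) with hζ
  have key : ∀ (f : H) (g : G),
      ⟪π g ζ, f⟫ = (Θη f : G → ℂ) g - (Q (Θη f) : G → ℂ) g :=
    zeta_pointwise π ξ p hξ hp hgη ζ hζ
  have hζ0 : ζ = 0 := by
    apply hmax
    · refine ⟨1, one_pos, ?_⟩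
      intro v s
      have hterm : ∀ g : G, ‖⟪v, π g ζ⟫‖ ^ 2
          = ‖((Θη v - Q (Θη v) : lp (fun _ : G => ℂ) 2) : G → ℂ) g‖ ^ 2 := by
        intro g
        rw [norm_inner_symm, key v g]
        have hsub : ((Θη v - Q (Θη v) : lp (fun _ : G => ℂ) 2) : G → ℂ) g
            = (Θη v : G → ℂ) g - (Q (Θη v) : G → ℂ) g := by
          rw [lp.coeFn_sub]; rfl
        rw [hsub]
      calc ∑ g ∈ s, ‖⟪v, π g ζ⟫‖ ^ 2
          = ∑ g ∈ s, ‖((Θη v - Q (Θη v) : lp (fun _ : G => ℂ) 2) : G → ℂ) g‖ ^ 2 :=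
            Finset.sum_congr rfl (fun g _ => hterm g)
        _ ≤ ‖Θη v - Q (Θη v)‖ ^ 2 := l2_sum_sq_le _ s
        _ ≤ ‖Θη v‖ ^ 2 := by
            have h := norm_sub_Qop_le π ξ p hξ hp hdisj (Θη v)
            nlinarith [norm_nonneg (Θη v - Q (Θη v)), norm_nonneg (Θη v)]
        _ = ‖v‖ ^ 2 := by rw [hηnorm v]
        _ = 1 * ‖v‖ ^ 2 := (one_mul _).symm
    · intro i v _ w hw
      have hterm : (fun g : G => ⟪v, π g ζ⟫ * (starRingEnd ℂ) ⟪w, π g (ξ i)⟫)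
          = fun g : G => ⟪((Θη v - Q (Θη v) : lp (fun _ : G => ℂ) 2) : G → ℂ) g,
              ((Θ i w : lp (fun _ : G => ℂ) 2) : G → ℂ) g⟫ := by
        funext g
        rw [RCLike.inner_apply]
        have e1 : ((Θη v - Q (Θη v) : lp (fun _ : G => ℂ) 2) : G → ℂ) g = ⟪π g ζ, v⟫ := by
          rw [key v g, lp.coeFn_sub]
          rfl
        rw [e1]
        have e2 : ((Θ i w : lp (fun _ : G => ℂ) 2) : G → ℂ) g = ⟪π g (ξ i), w⟫ := rfl
        rw [e2, ← inner_conj_symm v (π g ζ), ← inner_conj_symm (π g (ξ i)) w]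
        exact mul_comm _ _
      rw [hterm, ← lp.inner_eq_tsum]
      rw [inner_sub_left]
      rw [Qop_selfadj π ξ p hξ hp (Θη v) (Θ i w)]
      rw [Qop_th π ξ p hξ hp hdisj i w, sub_self]
  apply lp.ext
  funext g
  have := key f g
  rw [hζ0] at this
  have h0 : ⟪π g (0 : H), f⟫ = 0 := by
    rw [map_zero, inner_zero_left]
  rw [h0] at this
  have := this.symm
  rw [sub_eq_zero] at this
  exact this.symm

end Part5
section Part6

variable {G : Type*} [Group G] [Countable G]
variable {H : Type*} [NormedAddCommGroup H] [InnerProductSpace ℂ H] [CompleteSpace H]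
variable (π : G →* (H ≃ₗᵢ[ℂ] H)) {N : ℕ} (ξ : Fin (N + 1) → H)
  (p : Fin (N + 1) → (H →L[ℂ] H))
variable (hξ : ∀ i, IsParsevalFrameVectorIn π (ξ i) (orbitSpan π (ξ i)))
variable (hp : ∀ i, IsOrthoProjOnto (orbitSpan π (ξ i)) (p i))
variable (hdisj : ∀ i j, i ≠ j → StronglyDisjointPairIn π π (ξ i) (ξ j)
      (orbitSpan π (ξ i)) (orbitSpan π (ξ j)))

local notation "Θ" => Th π ξ p hξ hp
local notation "Q" => Qop π ξ p hξ hp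

include hp in
lemma adj_u_mem {u : H →L[ℂ] H} {i : Fin (N + 1)} (hupi : u ∘L p i = u) (f : H) :
    p i (ContinuousLinearMap.adjoint u f) = ContinuousLinearMap.adjoint u f := by
  apply ext_inner_left ℂ
  intro x
  rw [← proj_selfadj (hp i) x _]
  rw [ContinuousLinearMap.adjoint_inner_right, ContinuousLinearMap.adjoint_inner_right]
  conv_rhs => rw [← hupi]
  rfl

include hξ hp in
lemma ana_decomp (u : Fin (N + 1) → (H →L[ℂ] H))
    (hcomm : ∀ i, InCommutant π (u i)) {η : H} (hdec : η = ∑ i, u i (ξ i))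
    (f : H) (g : G) :
    ⟪π g η, f⟫ = ∑ i, ((Θ i (ContinuousLinearMap.adjoint (u i) f) :
      lp (fun _ : G => ℂ) 2) : G → ℂ) g := by
  rw [hdec, map_sum, sum_inner]
  apply Finset.sum_congr rfl
  intro i _
  rw [← hcomm i g (ξ i)]
  rw [(ContinuousLinearMap.adjoint_inner_right (u i) (π g (ξ i)) f).symm]
  rfl

include hξ hp hdisj in
lemma backward_parseval (u : Fin (N + 1) → (H →L[ℂ] H))
    (hcomm : ∀ i, InCommutant π (u i)) (hup : ∀ i, (u i) ∘L (p i) = u i)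
    {η : H} (hdec : η = ∑ i, u i (ξ i))
    (hsum : ∑ i, (u i) ∘L (ContinuousLinearMap.adjoint (u i)) = ContinuousLinearMap.id ℂ H) :
    IsParsevalFrameVector π η := by
  intro f
  set z : lp (fun _ : G => ℂ) 2 := ∑ i, Θ i (ContinuousLinearMap.adjoint (u i) f) with hz
  have hzg : ∀ g : G, (z : G → ℂ) g = ∑ i, ((Θ i (ContinuousLinearMap.adjoint (u i) f) :
      lp (fun _ : G => ℂ) 2) : G → ℂ) g := by
    intro g
    rw [hz, lp.coeFn_sum]
    simp
  have hptw : ∀ g : G, ‖⟪f, π g η⟫‖ ^ 2 = ‖(z : G → ℂ) g‖ ^ 2 := by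
    intro g
    rw [norm_inner_symm, ana_decomp π ξ p hξ hp u hcomm hdec f g, ← hzg g]
  have h1 : ∑' g : G, ‖⟪f, π g η⟫‖ ^ 2 = ‖z‖ ^ 2 := by
    rw [tsum_congr hptw, ← l2_norm_sq]
  rw [h1]
  have hzz : ⟪z, z⟫ = ⟪f, f⟫ := by
    rw [hz, sum_inner]
    have hrow : ∀ i : Fin (N + 1),
        ⟪Θ i (ContinuousLinearMap.adjoint (u i) f), z⟫
          = ⟪f, u i (ContinuousLinearMap.adjoint (u i) f)⟫ := by
      intro i
      rw [hz, inner_sum]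
      rw [Finset.sum_eq_single i]
      · rw [inner_Th_Th_same π ξ p hξ hp i]
        rw [adj_u_mem π ξ p hp (hup i)]
        exact ContinuousLinearMap.adjoint_inner_left (u i) _ f
      · intro j _ hj
        exact inner_Th_Th_ne π ξ p hξ hp hdisj (Ne.symm hj) _ _
      · intro h; exact absurd (Finset.mem_univ i) h
    rw [Finset.sum_congr rfl (fun i _ => hrow i), ← inner_sum]
    have hfix : ∑ i, u i (ContinuousLinearMap.adjoint (u i) f) = f := by
      have := congrArg (fun A : H →L[ℂ] H => A f) hsum
      simpa [ContinuousLinearMap.sum_apply] using this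
    rw [hfix]
  have h2 : ‖z‖ ^ 2 = RCLike.re ⟪z, z⟫ := (inner_self_eq_norm_sq z).symm
  rw [h2, hzz, inner_self_eq_norm_sq]

include hξ hp hdisj in
lemma adj_u_determined (u : Fin (N + 1) → (H →L[ℂ] H))
    (hcomm : ∀ i, InCommutant π (u i)) (hup : ∀ i, (u i) ∘L (p i) = u i)
    {η : H} (hdec : η = ∑ i, u i (ξ i)) (hgη : GoodVec π η) (j : Fin (N + 1)) (f : H) :
    ContinuousLinearMap.adjoint (u j) f
      = ContinuousLinearMap.adjoint (Θ j) (anaL π hgη f) := by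
  have hana : anaL π hgη f = ∑ i, Θ i (ContinuousLinearMap.adjoint (u i) f) := by
    apply lp.ext
    funext g
    have h1 : (anaL π hgη f : G → ℂ) g = ⟪π g η, f⟫ := rfl
    rw [h1, ana_decomp π ξ p hξ hp u hcomm hdec f g, lp.coeFn_sum]
    simp
  rw [hana, map_sum]
  rw [Finset.sum_eq_single j]
  · rw [adjTh_Th_same, adj_u_mem π ξ p hp (hup j)]
  · intro i _ hi
    exact adjTh_Th_ne π ξ p hξ hp hdisj hi _
  · intro h; exact absurd (Finset.mem_univ j) h

end Part6
theorem stmt9 {G : Type*} [Group G] [Countable G]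
    {H : Type*} [NormedAddCommGroup H] [InnerProductSpace ℂ H] [CompleteSpace H]
    (π : G →* (H ≃ₗᵢ[ℂ] H)) (N : ℕ) (ξ : Fin (N + 1) → H)
    (hξ0 : IsParsevalFrameVector π (ξ 0))
    (hξ : ∀ i, IsParsevalFrameVectorIn π (ξ i) (orbitSpan π (ξ i)))
    (p : Fin (N + 1) → (H →L[ℂ] H))
    (hp : ∀ i, IsOrthoProjOnto (orbitSpan π (ξ i)) (p i))
    (hdisj : ∀ i j, i ≠ j → StronglyDisjointPairIn π π (ξ i) (ξ j)
      (orbitSpan π (ξ i)) (orbitSpan π (ξ j)))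
    (hmax : ∀ ζ : H, IsBesselVector π ζ →
      (∀ i, StronglyDisjointPairIn π π ζ (ξ i) ⊤ (orbitSpan π (ξ i))) → ζ = 0)
    (η : H) :
    (IsParsevalFrameVector π η ↔
      ∃ u : Fin (N + 1) → (H →L[ℂ] H),
        (∀ i, InCommutant π (u i)) ∧ (∀ i, (u i) ∘L (p i) = u i) ∧
        η = ∑ i, u i (ξ i) ∧
        ∑ i, (u i) ∘L (ContinuousLinearMap.adjoint (u i)) = ContinuousLinearMap.id ℂ H) ∧
    (∀ u v : Fin (N + 1) → (H →L[ℂ] H),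
      ((∀ i, InCommutant π (u i)) ∧ (∀ i, (u i) ∘L (p i) = u i) ∧
        η = ∑ i, u i (ξ i) ∧
        ∑ i, (u i) ∘L (ContinuousLinearMap.adjoint (u i)) = ContinuousLinearMap.id ℂ H) →
      ((∀ i, InCommutant π (v i)) ∧ (∀ i, (v i) ∘L (p i) = v i) ∧
        η = ∑ i, v i (ξ i) ∧
        ∑ i, (v i) ∘L (ContinuousLinearMap.adjoint (v i)) = ContinuousLinearMap.id ℂ H) →
      u = v) := by

  classical
  have hgood : ∀ (η' : H), IsParsevalFrameVector π η' → GoodVec π η' :=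
    fun η' h => goodVec_of_parseval π h
  constructor
  · constructor
    · -- forward direction
      intro hη
      have hgη : GoodVec π η := goodVec_of_parseval π hη
      have hnorm : ∀ f : H, ‖anaL π hgη f‖ = ‖f‖ := norm_anaL_full π hη hgη
      have hfix : ∀ f : H, Qop π ξ p hξ hp (anaL π hgη f) = anaL π hgη f :=
        Qop_fix_eta π ξ p hξ hp hdisj hmax hgη hnorm
      refine ⟨fun i => (ContinuousLinearMap.adjoint (anaL π hgη)) ∘L (Th π ξ p hξ hp i),
        ?_, ?_, ?_, ?_⟩
      · intro i g x
        apply ext_inner_right ℂ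
        intro v
        rw [ContinuousLinearMap.comp_apply, ContinuousLinearMap.comp_apply]
        rw [ContinuousLinearMap.adjoint_inner_left]
        rw [inner_Th_shift π ξ p hξ hp hgη i g x v]
        rw [inner_pi_left]
        rw [ContinuousLinearMap.adjoint_inner_left]
      · intro i
        ext f
        rw [ContinuousLinearMap.comp_apply, ContinuousLinearMap.comp_apply,
          ContinuousLinearMap.comp_apply]
        rw [Th_proj]
      · apply ext_inner_right ℂ
        intro v
        rw [sum_inner]
        have hterm : ∀ i : Fin (N + 1),
            ⟪((ContinuousLinearMap.adjoint (anaL π hgη)) ∘L (Th π ξ p hξ hp i)) (ξ i), v⟫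
              = ((Th π ξ p hξ hp i (ContinuousLinearMap.adjoint (Th π ξ p hξ hp i)
                  (anaL π hgη v)) : lp (fun _ : G => ℂ) 2) : G → ℂ) (1 : G) := by
          intro i
          rw [ContinuousLinearMap.comp_apply, ContinuousLinearMap.adjoint_inner_left]
          rw [← ContinuousLinearMap.adjoint_inner_right (Th π ξ p hξ hp i) (ξ i)
            (anaL π hgη v)]
          show _ = ⟪π (1:G) (ξ i),
            ContinuousLinearMap.adjoint (Th π ξ p hξ hp i) (anaL π hgη v)⟫
          rw [pi_one_apply]
        rw [Finset.sum_congr rfl (fun i _ => hterm i)]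
        have hq : ∑ i, ((Th π ξ p hξ hp i (ContinuousLinearMap.adjoint (Th π ξ p hξ hp i)
              (anaL π hgη v)) : lp (fun _ : G => ℂ) 2) : G → ℂ) (1 : G)
            = ((Qop π ξ p hξ hp (anaL π hgη v) : lp (fun _ : G => ℂ) 2) : G → ℂ) (1 : G) := by
          rw [Qop_apply, lp.coeFn_sum]
          simp
        rw [hq, hfix v]
        show ⟪η, v⟫ = ⟪π (1:G) η, v⟫
        rw [pi_one_apply]
      · ext f
        rw [ContinuousLinearMap.sum_apply]
        apply ext_inner_left ℂ
        intro v
        rw [inner_sum]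
        have hterm : ∀ i : Fin (N + 1),
            ⟪v, (((ContinuousLinearMap.adjoint (anaL π hgη)) ∘L (Th π ξ p hξ hp i)) ∘L
                (ContinuousLinearMap.adjoint ((ContinuousLinearMap.adjoint (anaL π hgη)) ∘L
                  (Th π ξ p hξ hp i)))) f⟫
              = ⟪anaL π hgη v, Th π ξ p hξ hp i (ContinuousLinearMap.adjoint
                  (Th π ξ p hξ hp i) (anaL π hgη f))⟫ := by
          intro i
          rw [ContinuousLinearMap.adjoint_comp, ContinuousLinearMap.adjoint_adjoint]
          simp only [ContinuousLinearMap.comp_apply]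
          rw [ContinuousLinearMap.adjoint_inner_right]
        rw [Finset.sum_congr rfl (fun i _ => hterm i), ← inner_sum]
        rw [← Qop_apply π ξ p hξ hp (anaL π hgη f)]
        rw [hfix f]
        rw [← ContinuousLinearMap.adjoint_inner_right (anaL π hgη) v (anaL π hgη f)]
        rw [adj_anaL_anaL_full π hη hgη f]
        rfl
    · rintro ⟨u, hcomm, hup, hdec, hsum⟩
      exact backward_parseval π ξ p hξ hp hdisj u hcomm hup hdec hsum
  · rintro u v ⟨hcu, hpu, hdu, hsu⟩ ⟨hcv, hpv, hdv, hsv⟩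
    have hη : IsParsevalFrameVector π η :=
      backward_parseval π ξ p hξ hp hdisj u hcu hpu hdu hsu
    have hgη : GoodVec π η := goodVec_of_parseval π hη
    funext j
    have h1 : ∀ f : H, ContinuousLinearMap.adjoint (u j) f
        = ContinuousLinearMap.adjoint (v j) f := by
      intro f
      rw [adj_u_determined π ξ p hξ hp hdisj u hcu hpu hdu hgη j f,
        adj_u_determined π ξ p hξ hp hdisj v hcv hpv hdv hgη j f]
    have h2 : ContinuousLinearMap.adjoint (u j) = ContinuousLinearMap.adjoint (v j) :=
      ContinuousLinearMap.ext h1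
    calc u j = ContinuousLinearMap.adjoint (ContinuousLinearMap.adjoint (u j)) :=
          (ContinuousLinearMap.adjoint_adjoint _).symm
      _ = ContinuousLinearMap.adjoint (ContinuousLinearMap.adjoint (v j)) := by rw [h2]
      _ = v j := ContinuousLinearMap.adjoint_adjoint _
end
end
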